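/- arXiv:1112.0246 — 6 statements merged into one kernel-verified Lean document; each statement's English description precedes it below -/
import Mathlib

section
/- For all integers i and j, the commutator [A_{1,2i+1}, A_{1,2j+1}] = A_{1,2i+1}·A_{1,2j+1} − A_{1,2j+1}·A_{1,2i+1} equals the integer scalar multiple 4(i−j)·A_{1,2(i+j)+1}. (Equivalently, the structure constants of the algebra generated by the additional symmetries of the two-component BKP hierarchy satisfy c_{1,2i+1;1,2j+1}^{q,r} = 4(i−j)δ_{q,1}δ_{r,2(i+j)+1}.) -/
section
variable {R : Type*} [Ring R] (L : Rˣ) (M : R)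

lemma pmulAux (a b : ℤ) : ((L^a : Rˣ) : R) * ((L^b : Rˣ) : R) = ((L^(a+b) : Rˣ) : R) := by
  rw [← Units.val_mul, ← zpow_add]

lemma lone : ((L^(1:ℤ) : Rˣ) : R) = (L : R) := by norm_num

lemma keyAux (hLM : (L : R) * M - M * (L : R) = 1) :
    ∀ n : ℤ, ((L^n : Rˣ) : R) * M = M * ((L^n : Rˣ) : R) + n • ((L^(n-1) : Rˣ) : R) := by
  have hL : (L : R) * M = M * (L : R) + 1 := by
    rw [sub_eq_iff_eq_add] at hLM; rw [hLM]; abel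
  have hinv : ((L^(-1:ℤ) : Rˣ) : R) * M
      = M * ((L^(-1:ℤ) : Rˣ) : R) - ((L^(-2:ℤ) : Rˣ) : R) := by
    have h1 : (L : R) * ((L^(-1:ℤ) : Rˣ) : R) = 1 := by
      rw [← lone L, pmulAux]; norm_num
    have h2 : ((L^(-1:ℤ) : Rˣ) : R) * (L : R) = 1 := by
      rw [← lone L, pmulAux]; norm_num
    have hML : M * (L : R) = (L : R) * M - 1 := by rw [hL]; noncomm_ring
    calc ((L^(-1:ℤ) : Rˣ) : R) * M
        = ((L^(-1:ℤ) : Rˣ) : R) * (M * (L : R)) * ((L^(-1:ℤ) : Rˣ) : R) := by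
          rw [← mul_assoc, mul_assoc _ _ ((L^(-1:ℤ) : Rˣ) : R), h1, mul_one]
      _ = ((L^(-1:ℤ) : Rˣ) : R) * ((L : R) * M) * ((L^(-1:ℤ) : Rˣ) : R)
          - ((L^(-1:ℤ) : Rˣ) : R) * ((L^(-1:ℤ) : Rˣ) : R) := by
          rw [hML]; noncomm_ring
      _ = M * ((L^(-1:ℤ) : Rˣ) : R) - ((L^(-2:ℤ) : Rˣ) : R) := by
          rw [← mul_assoc, h2, one_mul, pmulAux]; norm_num
  intro n
  induction n using Int.induction_on with
  | zero => simp
  | succ k ih =>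
      have h1 : ((L^((k:ℤ)+1) : Rˣ) : R) = ((L^(k:ℤ) : Rˣ) : R) * (L : R) := by
        rw [← lone L, pmulAux]
      calc ((L^((k:ℤ)+1) : Rˣ) : R) * M
          = ((L^(k:ℤ) : Rˣ) : R) * ((L : R) * M) := by rw [h1, mul_assoc]
        _ = (((L^(k:ℤ) : Rˣ) : R) * M) * (L : R) + ((L^(k:ℤ) : Rˣ) : R) := by
            rw [hL]; noncomm_ring
        _ = M * ((L^((k:ℤ)+1) : Rˣ) : R) + ((k:ℤ)+1) • ((L^((k:ℤ)+1-1) : Rˣ) : R) := by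
            rw [ih]
            simp only [add_mul, smul_mul_assoc, mul_assoc, ← lone L, pmulAux]
            rw [show (k:ℤ) - 1 + 1 = k by ring, show (k:ℤ)+1-1 = k by ring,
              add_smul, one_smul]
            abel
  | pred k ih =>
      have h1 : ((L^(-(k:ℤ)-1) : Rˣ) : R) = ((L^(-(k:ℤ)) : Rˣ) : R) * ((L^(-1:ℤ) : Rˣ) : R) := by
        rw [show -(k:ℤ)-1 = -(k:ℤ) + (-1) from by ring, ← pmulAux]
      calc ((L^(-(k:ℤ)-1) : Rˣ) : R) * M
          = ((L^(-(k:ℤ)) : Rˣ) : R) * (((L^(-1:ℤ) : Rˣ) : R) * M) := by rw [h1, mul_assoc]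
        _ = (((L^(-(k:ℤ)) : Rˣ) : R) * M) * ((L^(-1:ℤ) : Rˣ) : R)
            - ((L^(-(k:ℤ)) : Rˣ) : R) * ((L^(-2:ℤ) : Rˣ) : R) := by
            rw [hinv]; noncomm_ring
        _ = M * ((L^(-(k:ℤ)-1) : Rˣ) : R) + (-(k:ℤ)-1) • ((L^(-(k:ℤ)-1-1) : Rˣ) : R) := by
            rw [ih]
            simp only [add_mul, smul_mul_assoc, mul_assoc, pmulAux]
            rw [show -(k:ℤ) + -1 = -(k:ℤ)-1 by ring, show -(k:ℤ) - 1 + -1 = -(k:ℤ)-1-1 by ring,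
              show -(k:ℤ) + -2 = -(k:ℤ)-1-1 by ring,
              show (-(k:ℤ)-1) • ((L^(-(k:ℤ)-1-1) : Rˣ) : R)
                = (-(k:ℤ)) • ((L^(-(k:ℤ)-1-1) : Rˣ) : R) - ((L^(-(k:ℤ)-1-1) : Rˣ) : R) from by
                rw [sub_smul, one_smul]]
            abel
lemma pmulAux' (a b : ℤ) (x : R) :
    ((L^a : Rˣ) : R) * (((L^b : Rˣ) : R) * x) = ((L^(a+b) : Rˣ) : R) * x := by
  rw [← mul_assoc, pmulAux]

lemma keyAux' (hLM : (L : R) * M - M * (L : R) = 1) (n : ℤ) (x : R) :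
    ((L^n : Rˣ) : R) * (M * x)
      = M * (((L^n : Rˣ) : R) * x) + n • (((L^(n-1) : Rˣ) : R) * x) := by
  rw [← mul_assoc, keyAux L M hLM n, add_mul, smul_mul_assoc, mul_assoc]

end

/-- For the Orlov–Schulman generators `A l = M * L^l + L^(l-1) * M * L`
(with `[L, M] = 1`, `L` invertible), one has
`[A (2i+1), A (2j+1)] = 4(i-j) • A (2(i+j)+1)` for all integers `i, j`. -/
theorem commutator_A_one_odd {R : Type*} [Ring R] (L : Rˣ) (M : R)
    (hLM : (L : R) * M - M * (L : R) = 1)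
    (A : ℤ → R)
    (hA : ∀ l : ℤ, A l = M * ((L ^ l : Rˣ) : R) + ((L ^ (l - 1) : Rˣ) : R) * M * (L : R))
    (i j : ℤ) :
    A (2 * i + 1) * A (2 * j + 1) - A (2 * j + 1) * A (2 * i + 1)
      = (4 * (i - j)) • A (2 * (i + j) + 1) := by
  simp only [hA, ← lone L]
  simp only [mul_add, add_mul, smul_mul_assoc, mul_smul_comm, smul_add, smul_smul, mul_assoc,
    pmulAux, pmulAux', keyAux L M hLM, keyAux' L M hLM]
  ring_nf
  module
end

section
/- For every integer j ≥ −1, the element B_j commutes with 𝓛, i.e. B_j·𝓛 = 𝓛·B_j. (This is the identity [B_j, 𝓛] = −L^{(2n−2)(j+1)} + L̂^{2(j+1)} = 0, which makes the Virasoro flows ∂𝓛/∂s_j = [−(B_j)_−, 𝓛] of the Drinfeld–Sokolov hierarchy of type D_n well defined.) -/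
section Aux

variable {R : Type*} [Ring R] [Algebra ℚ R]

lemma coe_zpow_mul (L : Rˣ) (a b c : ℤ) (h : a + b = c) :
    ((L ^ a : Rˣ) : R) * ((L ^ b : Rˣ) : R) = ((L ^ c : Rˣ) : R) := by
  rw [← Units.val_mul, ← zpow_add, h]

lemma key_inv (L : Rˣ) (M : R) (h : (L : R) * M - M * (L : R) = 1) :
    M * ((L⁻¹ : Rˣ) : R) = ((L⁻¹ : Rˣ) : R) * M + ((L⁻¹ : Rˣ) : R) * ((L⁻¹ : Rˣ) : R) := by
  set a : R := ((L⁻¹ : Rˣ) : R) with ha'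
  have ha : a * (L : R) = 1 := by rw [ha', ← Units.val_mul, inv_mul_cancel, Units.val_one]
  have hb : (L : R) * a = 1 := by rw [ha', ← Units.val_mul, mul_inv_cancel, Units.val_one]
  have key : a * ((L:R)*M - M*(L:R)) * a = a * 1 * a := by rw [h]
  calc M*a = a*(L:R)*(M*a) := by rw [ha, one_mul]
    _ = a*((L:R)*M)*a := by noncomm_ring
    _ = a*(M*(L:R))*a + a*a := by linear_combination (norm := noncomm_ring) key
    _ = a*M*((L:R)*a) + a*a := by noncomm_ring
    _ = a*M + a*a := by rw [hb, mul_one]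

lemma key_comm (L : Rˣ) (M : R) (h : (L : R) * M - M * (L : R) = 1) (m : ℤ) :
    M * ((L ^ m : Rˣ) : R) =
      ((L ^ m : Rˣ) : R) * M - algebraMap ℚ R (m : ℚ) * ((L ^ (m - 1) : Rˣ) : R) := by
  induction m using Int.induction_on with
  | zero => simp
  | succ i ih =>
      have e1 : ((L ^ ((i : ℤ) + 1) : Rˣ) : R) = ((L ^ (i : ℤ) : Rˣ) : R) * (L : R) := by
        rw [zpow_add_one, Units.val_mul]
      have e2 : ((i : ℤ) + 1 - 1) = (i : ℤ) := by ring
      have e3 : ((L ^ ((i : ℤ) - 1) : Rˣ) : R) * (L : R) = ((L ^ (i : ℤ) : Rˣ) : R) := by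
        rw [← Units.val_mul, ← zpow_add_one, sub_add_cancel]
      have c1 : algebraMap ℚ R (((i : ℤ) + 1 : ℤ) : ℚ)
          = algebraMap ℚ R ((i : ℤ) : ℚ) + 1 := by
        rw [show (((i : ℤ) + 1 : ℤ) : ℚ) = ((i : ℤ) : ℚ) + 1 by push_cast; ring,
          map_add, map_one]
      rw [e1, e2, c1]
      have hML : M * (L : R) = (L : R) * M - 1 := by linear_combination (norm := noncomm_ring) -h
      calc M * (((L ^ (i : ℤ) : Rˣ) : R) * (L : R))
          = (M * ((L ^ (i : ℤ) : Rˣ) : R)) * (L : R) := by noncomm_ring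
        _ = (((L ^ (i : ℤ) : Rˣ) : R) * M
              - algebraMap ℚ R ((i : ℤ) : ℚ) * ((L ^ ((i : ℤ) - 1) : Rˣ) : R)) * (L : R) := by
            rw [ih]
        _ = ((L ^ (i : ℤ) : Rˣ) : R) * (M * (L : R))
              - algebraMap ℚ R ((i : ℤ) : ℚ) * (((L ^ ((i : ℤ) - 1) : Rˣ) : R) * (L : R)) := by
            noncomm_ring
        _ = ((L ^ (i : ℤ) : Rˣ) : R) * ((L : R) * M - 1)
              - algebraMap ℚ R ((i : ℤ) : ℚ) * ((L ^ (i : ℤ) : Rˣ) : R) := by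
            rw [hML, e3]
        _ = ((L ^ (i : ℤ) : Rˣ) : R) * (L : R) * M
              - (algebraMap ℚ R ((i : ℤ) : ℚ) + 1) * ((L ^ (i : ℤ) : Rˣ) : R) := by
            noncomm_ring
  | pred i ih =>
      set a : R := ((L⁻¹ : Rˣ) : R) with ha'
      have hinv := key_inv L M h
      have e1 : ((L ^ (-(i : ℤ) - 1) : Rˣ) : R) = ((L ^ (-(i : ℤ)) : Rˣ) : R) * a := by
        rw [zpow_sub_one, Units.val_mul]
      have e3 : ((L ^ (-(i : ℤ) - 1) : Rˣ) : R) * a = ((L ^ (-(i : ℤ) - 1 - 1) : Rˣ) : R) := by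
        rw [zpow_sub_one (L) (-(i:ℤ) - 1), Units.val_mul]
      have c1 : algebraMap ℚ R ((-(i : ℤ) - 1 : ℤ) : ℚ)
          = algebraMap ℚ R ((-(i : ℤ) : ℤ) : ℚ) - 1 := by
        rw [show ((-(i : ℤ) - 1 : ℤ) : ℚ) = ((-(i : ℤ) : ℤ) : ℚ) - 1 by push_cast; ring,
          map_sub, map_one]
      rw [e1, c1]
      calc M * (((L ^ (-(i : ℤ)) : Rˣ) : R) * a)
          = (M * ((L ^ (-(i : ℤ)) : Rˣ) : R)) * a := by noncomm_ring
        _ = (((L ^ (-(i : ℤ)) : Rˣ) : R) * M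
              - algebraMap ℚ R ((-(i : ℤ) : ℤ) : ℚ) * ((L ^ (-(i : ℤ) - 1) : Rˣ) : R)) * a := by
            rw [ih]
        _ = ((L ^ (-(i : ℤ)) : Rˣ) : R) * (M * a)
              - algebraMap ℚ R ((-(i : ℤ) : ℤ) : ℚ) * (((L ^ (-(i : ℤ) - 1) : Rˣ) : R) * a) := by
            noncomm_ring
        _ = ((L ^ (-(i : ℤ)) : Rˣ) : R) * (a * M) + (((L ^ (-(i : ℤ)) : Rˣ) : R) * a) * a
              - algebraMap ℚ R ((-(i : ℤ) : ℤ) : ℚ) * ((L ^ (-(i : ℤ) - 1 - 1) : Rˣ) : R) := by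
            rw [hinv, e3]; noncomm_ring
        _ = ((L ^ (-(i : ℤ)) : Rˣ) : R) * a * M
              + ((L ^ (-(i : ℤ) - 1) : Rˣ) : R) * a
              - algebraMap ℚ R ((-(i : ℤ) : ℤ) : ℚ) * ((L ^ (-(i : ℤ) - 1 - 1) : Rˣ) : R) := by
            rw [← e1, e1]; noncomm_ring
        _ = ((L ^ (-(i : ℤ)) : Rˣ) : R) * a * M
              - (algebraMap ℚ R ((-(i : ℤ) : ℤ) : ℚ) - 1) * ((L ^ (-(i : ℤ) - 1 - 1) : Rˣ) : R) := by
            rw [e3]; noncomm_ring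

end Aux

/-- For every integer `j ≥ -1`, the operator `B j` commutes with
`𝓛 = L^(2n-2) = L̂²`, i.e. `B j * 𝓛 = 𝓛 * B j`. -/
theorem Bj_commutes_with_Lax {R : Type*} [Ring R] [Algebra ℚ R]
    (n : ℤ) (hn : 3 ≤ n)
    (L Lh : Rˣ) (M Mh : R)
    (hLM : (L : R) * M - M * (L : R) = 1)
    (hLMh : ((Lh⁻¹ : Rˣ) : R) * Mh - Mh * ((Lh⁻¹ : Rˣ) : R) = 1)
    (hred : ((L ^ (2 * n - 2) : Rˣ) : R) = ((Lh ^ (2 : ℤ) : Rˣ) : R))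
    (B : ℤ → R)
    (hB : ∀ j : ℤ, B j =
      (4 * (n : ℚ) - 4)⁻¹ • (M * ((L ^ ((2 * n - 2) * j + 1) : Rˣ) : R)
          + ((L ^ ((2 * n - 2) * j) : Rˣ) : R) * M * (L : R))
      + (4 : ℚ)⁻¹ • (Mh * ((Lh ^ (2 * j - 1) : Rˣ) : R)
          + ((Lh ^ (2 * j) : Rˣ) : R) * Mh * ((Lh⁻¹ : Rˣ) : R)))
    (j : ℤ) (hj : -1 ≤ j) :
    B j * ((L ^ (2 * n - 2) : Rˣ) : R) = ((L ^ (2 * n - 2) : Rˣ) : R) * B j := by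
  -- notation
  set k : ℤ := 2 * n - 2 with hk
  set X : R := ((L ^ k : Rˣ) : R) with hX
  set Y : R := ((Lh ^ (2 : ℤ) : Rˣ) : R) with hY
  set S : R := ((L ^ (k * (j + 1)) : Rˣ) : R) with hS
  set Sh : R := ((Lh ^ (2 * (j + 1)) : Rˣ) : R) with hSh
  set c' : R := algebraMap ℚ R (4 * (n : ℚ) - 4)⁻¹ with hc'
  set f' : R := algebraMap ℚ R (4 : ℚ)⁻¹ with hf'
  set aK : R := algebraMap ℚ R ((k : ℤ) : ℚ) with haK
  set a2 : R := algebraMap ℚ R ((2 : ℤ) : ℚ) with ha2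
  set T1 : R := M * ((L ^ (k * j + 1) : Rˣ) : R) with hT1
  set T2 : R := ((L ^ (k * j) : Rˣ) : R) * M * (L : R) with hT2
  set T3 : R := Mh * ((Lh ^ (2 * j - 1) : Rˣ) : R) with hT3
  set T4 : R := ((Lh ^ (2 * j) : Rˣ) : R) * Mh * ((Lh⁻¹ : Rˣ) : R) with hT4
  -- S = Sh
  have hredU : (L ^ k : Rˣ) = Lh ^ (2 : ℤ) := Units.ext hred
  have hSSh : S = Sh := by
    rw [hS, hSh]
    have : (L ^ (k * (j + 1)) : Rˣ) = Lh ^ (2 * (j + 1)) := by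
      rw [zpow_mul L k (j+1), hredU, ← zpow_mul]
    rw [this]
  have hXY : X = Y := hred
  -- basic commutation facts
  have hM := key_comm L M hLM
  have hMh' := key_comm (Lh⁻¹) Mh hLMh
  have hMh2 : Mh * Y = Y * Mh + a2 * ((Lh ^ (3 : ℤ) : Rˣ) : R) := by
    have := hMh' (-2)
    have e1 : ((Lh⁻¹) ^ (-2 : ℤ) : Rˣ) = Lh ^ (2 : ℤ) := by
      rw [inv_zpow, ← zpow_neg]; norm_num
    have e2 : ((Lh⁻¹) ^ ((-2 : ℤ) - 1) : Rˣ) = Lh ^ (3 : ℤ) := by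
      rw [inv_zpow, ← zpow_neg]; norm_num
    rw [e1, e2] at this
    have c1 : algebraMap ℚ R ((-2 : ℤ) : ℚ) = -a2 := by
      rw [ha2, ← map_neg]; norm_num
    rw [c1] at this
    rw [hY]; rw [this]; noncomm_ring
  have hMk : M * X = X * M - aK * ((L ^ (k - 1) : Rˣ) : R) := by
    rw [hX, haK]; exact hM k
  -- centrality of scalars
  have hcX : c' * X = X * c' := by rw [hc']; exact Algebra.commutes _ _
  have hfX : f' * X = X * f' := by rw [hf']; exact Algebra.commutes _ _
  -- coefficient identities
  have hkQ : ((k : ℤ) : ℚ) = 2 * (n : ℚ) - 2 := by rw [hk]; push_cast; ring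
  have hnQ : (3 : ℚ) ≤ (n : ℚ) := by exact_mod_cast hn
  have hc1 : c' * (aK + aK) = 1 := by
    rw [hc', haK, ← map_add, ← map_mul, hkQ]
    have hne : 4 * (n : ℚ) - 4 ≠ 0 := by nlinarith
    have : (4 * (n : ℚ) - 4)⁻¹ * (2 * (n:ℚ) - 2 + (2 * (n:ℚ) - 2)) = 1 := by
      rw [inv_mul_eq_iff_eq_mul₀ hne]; ring
    rw [this, map_one]
  have hf1 : f' * (a2 + a2) = 1 := by
    rw [hf', ha2, ← map_add, ← map_mul]
    norm_num
  -- E1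
  have E1 : T1 * X = X * T1 - aK * S := by
    rw [hT1, hX, hS]
    calc M * ((L ^ (k * j + 1) : Rˣ) : R) * ((L ^ k : Rˣ) : R)
        = M * (((L ^ (k * j + 1) : Rˣ) : R) * ((L ^ k : Rˣ) : R)) := by noncomm_ring
      _ = M * (((L ^ k : Rˣ) : R) * ((L ^ (k * j + 1) : Rˣ) : R)) := by
          rw [coe_zpow_mul L (k*j+1) k (k*j+1+k) (by ring),
              coe_zpow_mul L k (k*j+1) (k*j+1+k) (by ring)]
      _ = (M * ((L ^ k : Rˣ) : R)) * ((L ^ (k * j + 1) : Rˣ) : R) := by noncomm_ring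
      _ = (((L ^ k : Rˣ) : R) * M - aK * ((L ^ (k - 1) : Rˣ) : R))
            * ((L ^ (k * j + 1) : Rˣ) : R) := by rw [← hX, hMk, hX]
      _ = ((L ^ k : Rˣ) : R) * (M * ((L ^ (k * j + 1) : Rˣ) : R))
            - aK * (((L ^ (k - 1) : Rˣ) : R) * ((L ^ (k * j + 1) : Rˣ) : R)) := by noncomm_ring
      _ = ((L ^ k : Rˣ) : R) * (M * ((L ^ (k * j + 1) : Rˣ) : R))
            - aK * ((L ^ (k * (j + 1)) : Rˣ) : R) := by
          rw [coe_zpow_mul L (k-1) (k*j+1) (k*(j+1)) (by ring)]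
  -- E2
  have E2 : T2 * X = X * T2 - aK * S := by
    rw [hT2, hX, hS]
    have hQa : ((L ^ (k * j) : Rˣ) : R) * aK = aK * ((L ^ (k * j) : Rˣ) : R) := by
      rw [haK]; exact (Algebra.commutes _ _).symm
    calc ((L ^ (k * j) : Rˣ) : R) * M * (L : R) * ((L ^ k : Rˣ) : R)
        = ((L ^ (k * j) : Rˣ) : R) * (M * ((L : R) * ((L ^ k : Rˣ) : R))) := by noncomm_ring
      _ = ((L ^ (k * j) : Rˣ) : R) * (M * (((L ^ k : Rˣ) : R) * (L : R))) := by
          have hL1 : (L : R) = ((L ^ (1 : ℤ) : Rˣ) : R) := by rw [zpow_one]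
          rw [hL1, coe_zpow_mul L 1 k (k+1) (by ring),
              coe_zpow_mul L k 1 (k+1) (by ring)]
      _ = ((L ^ (k * j) : Rˣ) : R) * ((M * ((L ^ k : Rˣ) : R)) * (L : R)) := by noncomm_ring
      _ = ((L ^ (k * j) : Rˣ) : R) * ((((L ^ k : Rˣ) : R) * M
            - aK * ((L ^ (k - 1) : Rˣ) : R)) * (L : R)) := by rw [← hX, hMk, hX]
      _ = (((L ^ (k * j) : Rˣ) : R) * ((L ^ k : Rˣ) : R)) * M * (L : R)
            - (((L ^ (k * j) : Rˣ) : R) * aK) * (((L ^ (k - 1) : Rˣ) : R) * (L : R)) := by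
          noncomm_ring
      _ = (((L ^ k : Rˣ) : R) * ((L ^ (k * j) : Rˣ) : R)) * M * (L : R)
            - aK * (((L ^ (k * j) : Rˣ) : R) * (((L ^ (k - 1) : Rˣ) : R) * (L : R))) := by
          rw [coe_zpow_mul L (k*j) k (k*j+k) (by ring),
              coe_zpow_mul L k (k*j) (k*j+k) (by ring), hQa]
          noncomm_ring
      _ = ((L ^ k : Rˣ) : R) * (((L ^ (k * j) : Rˣ) : R) * M * (L : R))
            - aK * ((L ^ (k * (j + 1)) : Rˣ) : R) := by
          have h1 : ((L ^ (k - 1) : Rˣ) : R) * (L : R) = ((L ^ k : Rˣ) : R) := by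
            rw [← Units.val_mul, ← zpow_add_one, sub_add_cancel]
          have h2 : ((L ^ (k * j) : Rˣ) : R) * ((L ^ k : Rˣ) : R)
              = ((L ^ (k * (j + 1)) : Rˣ) : R) :=
            coe_zpow_mul L (k*j) k (k*(j+1)) (by ring)
          linear_combination (norm := noncomm_ring)
            - (aK * ((L ^ (k * j) : Rˣ) : R)) * h1 - aK * h2
  -- E3
  have E3 : T3 * X = X * T3 + a2 * S := by
    rw [hT3, hXY, hSSh, hY, hSh]
    calc Mh * ((Lh ^ (2 * j - 1) : Rˣ) : R) * ((Lh ^ (2:ℤ) : Rˣ) : R)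
        = Mh * (((Lh ^ (2 * j - 1) : Rˣ) : R) * ((Lh ^ (2:ℤ) : Rˣ) : R)) := by noncomm_ring
      _ = Mh * (((Lh ^ (2:ℤ) : Rˣ) : R) * ((Lh ^ (2 * j - 1) : Rˣ) : R)) := by
          rw [coe_zpow_mul Lh (2*j-1) 2 (2*j+1) (by ring),
              coe_zpow_mul Lh 2 (2*j-1) (2*j+1) (by ring)]
      _ = (Mh * ((Lh ^ (2:ℤ) : Rˣ) : R)) * ((Lh ^ (2 * j - 1) : Rˣ) : R) := by noncomm_ring
      _ = (((Lh ^ (2:ℤ) : Rˣ) : R) * Mh + a2 * ((Lh ^ (3:ℤ) : Rˣ) : R))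
            * ((Lh ^ (2 * j - 1) : Rˣ) : R) := by rw [← hY, hMh2, hY]
      _ = ((Lh ^ (2:ℤ) : Rˣ) : R) * (Mh * ((Lh ^ (2 * j - 1) : Rˣ) : R))
            + a2 * (((Lh ^ (3:ℤ) : Rˣ) : R) * ((Lh ^ (2 * j - 1) : Rˣ) : R)) := by noncomm_ring
      _ = ((Lh ^ (2:ℤ) : Rˣ) : R) * (Mh * ((Lh ^ (2 * j - 1) : Rˣ) : R))
            + a2 * ((Lh ^ (2 * (j + 1)) : Rˣ) : R) := by
          rw [coe_zpow_mul Lh 3 (2*j-1) (2*(j+1)) (by ring)]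
  -- E4
  have E4 : T4 * X = X * T4 + a2 * S := by
    rw [hT4, hXY, hSSh, hY, hSh]
    have hLhinv : ((Lh⁻¹ : Rˣ) : R) = ((Lh ^ (-1 : ℤ) : Rˣ) : R) := by
      rw [zpow_neg_one]
    have hQa : ((Lh ^ (2*j) : Rˣ) : R) * a2 = a2 * ((Lh ^ (2*j) : Rˣ) : R) := by
      rw [ha2]; exact (Algebra.commutes _ _).symm
    rw [hLhinv]
    calc ((Lh ^ (2 * j) : Rˣ) : R) * Mh * ((Lh ^ (-1 : ℤ) : Rˣ) : R) * ((Lh ^ (2:ℤ) : Rˣ) : R)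
        = ((Lh ^ (2 * j) : Rˣ) : R) * (Mh * (((Lh ^ (-1 : ℤ) : Rˣ) : R) * ((Lh ^ (2:ℤ) : Rˣ) : R))) := by
          noncomm_ring
      _ = ((Lh ^ (2 * j) : Rˣ) : R) * (Mh * (((Lh ^ (2:ℤ) : Rˣ) : R) * ((Lh ^ (-1 : ℤ) : Rˣ) : R))) := by
          rw [coe_zpow_mul Lh (-1) 2 1 (by ring), coe_zpow_mul Lh 2 (-1) 1 (by ring)]
      _ = ((Lh ^ (2 * j) : Rˣ) : R) * ((Mh * ((Lh ^ (2:ℤ) : Rˣ) : R)) * ((Lh ^ (-1 : ℤ) : Rˣ) : R)) := by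
          noncomm_ring
      _ = ((Lh ^ (2 * j) : Rˣ) : R) * (((((Lh ^ (2:ℤ) : Rˣ) : R) * Mh)
            + a2 * ((Lh ^ (3:ℤ) : Rˣ) : R)) * ((Lh ^ (-1 : ℤ) : Rˣ) : R)) := by
          rw [← hY, hMh2, hY]
      _ = (((Lh ^ (2 * j) : Rˣ) : R) * ((Lh ^ (2:ℤ) : Rˣ) : R)) * Mh * ((Lh ^ (-1 : ℤ) : Rˣ) : R)
            + (((Lh ^ (2 * j) : Rˣ) : R) * a2) * (((Lh ^ (3:ℤ) : Rˣ) : R) * ((Lh ^ (-1 : ℤ) : Rˣ) : R)) := by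
          noncomm_ring
      _ = ((Lh ^ (2:ℤ) : Rˣ) : R) * (((Lh ^ (2 * j) : Rˣ) : R) * Mh * ((Lh ^ (-1 : ℤ) : Rˣ) : R))
            + a2 * ((Lh ^ (2 * (j + 1)) : Rˣ) : R) := by
          have h1 : ((Lh ^ (3:ℤ) : Rˣ) : R) * ((Lh ^ (-1:ℤ) : Rˣ) : R)
              = ((Lh ^ (2:ℤ) : Rˣ) : R) := coe_zpow_mul Lh 3 (-1) 2 (by ring)
          have h2 : ((Lh ^ (2*j) : Rˣ) : R) * ((Lh ^ (2:ℤ) : Rˣ) : R)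
              = ((Lh ^ (2:ℤ) : Rˣ) : R) * ((Lh ^ (2*j) : Rˣ) : R) := by
            rw [coe_zpow_mul Lh (2*j) 2 (2*j+2) (by ring),
                coe_zpow_mul Lh 2 (2*j) (2*j+2) (by ring)]
          have h3 : ((Lh ^ (2*j) : Rˣ) : R) * ((Lh ^ (2:ℤ) : Rˣ) : R)
              = ((Lh ^ (2 * (j + 1)) : Rˣ) : R) :=
            coe_zpow_mul Lh (2*j) 2 (2*(j+1)) (by ring)
          linear_combination (norm := noncomm_ring)
            h2 * (Mh * ((Lh ^ (-1:ℤ) : Rˣ) : R))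
            + (((Lh ^ (2*j) : Rˣ) : R) * a2) * h1
            + hQa * ((Lh ^ (2:ℤ) : Rˣ) : R)
            + a2 * h3
  -- assemble
  have hBj : B j = c' * (T1 + T2) + f' * (T3 + T4) := by
    rw [hB j, Algebra.smul_def, Algebra.smul_def]
  rw [hBj]
  linear_combination (norm := noncomm_ring)
    c' * E1 + c' * E2 + f' * E3 + f' * E4
    + hcX * (T1 + T2) + hfX * (T3 + T4)
    - hc1 * S + hf1 * S
end

section
/- For every integer j ≥ −1, B_j = B_{−1}·𝓛^{j+1}. -/
lemma weyl_comm {R : Type*} [Ring R] [Algebra ℚ R] (U : Rˣ) (M : R)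
    (h : (U : R) * M - M * (U : R) = 1) (k : ℤ) :
    M * ((U ^ k : Rˣ) : R) = ((U ^ k : Rˣ) : R) * M - (k : ℚ) • ((U ^ (k - 1) : Rˣ) : R) := by
  have hMU : M * (U : R) = (U : R) * M - 1 := by
    rw [sub_eq_iff_eq_add.mp h]; abel
  have h1 : ((U⁻¹ : Rˣ) : R) * (U : R) = 1 := by
    rw [← Units.val_mul, inv_mul_cancel U, Units.val_one]
  have h2 : (U : R) * ((U⁻¹ : Rˣ) : R) = 1 := by
    rw [← Units.val_mul, mul_inv_cancel U, Units.val_one]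
  have hUM : (U : R) * M = M * (U : R) + 1 := by rw [hMU]; abel
  have hMUi : M * ((U⁻¹ : Rˣ) : R)
      = ((U⁻¹ : Rˣ) : R) * M + ((U⁻¹ : Rˣ) : R) * ((U⁻¹ : Rˣ) : R) := by
    set V := ((U⁻¹ : Rˣ) : R) with hV
    calc M * V = V * ((U : R) * (M * V)) := by rw [← mul_assoc, ← mul_assoc, h1, one_mul]
      _ = V * ((U : R) * M * V) := by rw [mul_assoc]
      _ = V * ((M * (U : R) + 1) * V) := by rw [hUM]
      _ = V * (M * ((U : R) * V) + V) := by noncomm_ring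
      _ = V * (M + V) := by rw [h2, mul_one]
      _ = V * M + V * V := by noncomm_ring
  induction k using Int.induction_on with
  | zero => simp
  | succ i ih =>
      calc M * ((U ^ ((i : ℤ) + 1) : Rˣ) : R)
          = M * ((U ^ (i : ℤ) : Rˣ) : R) * (U : R) := by
            rw [zpow_add_one, Units.val_mul, mul_assoc]
        _ = (((U ^ (i : ℤ) : Rˣ) : R) * M - ((i : ℤ) : ℚ) • ((U ^ ((i : ℤ) - 1) : Rˣ) : R)) * (U : R) := by
            rw [ih]
        _ = ((U ^ (i : ℤ) : Rˣ) : R) * (M * (U : R))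
            - ((i : ℤ) : ℚ) • (((U ^ ((i : ℤ) - 1) : Rˣ) : R) * (U : R)) := by
            rw [sub_mul, smul_mul_assoc, mul_assoc]
        _ = ((U ^ (i : ℤ) : Rˣ) : R) * ((U : R) * M) - ((U ^ (i : ℤ) : Rˣ) : R)
            - ((i : ℤ) : ℚ) • (((U ^ ((i : ℤ) - 1) : Rˣ) : R) * (U : R)) := by
            rw [hMU]; noncomm_ring
        _ = ((U ^ ((i : ℤ) + 1) : Rˣ) : R) * M - ((U ^ (i : ℤ) : Rˣ) : R)
            - ((i : ℤ) : ℚ) • ((U ^ (i : ℤ) : Rˣ) : R) := by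
            rw [← mul_assoc, ← Units.val_mul, ← zpow_add_one, ← Units.val_mul, ← zpow_add_one,
              show (i : ℤ) - 1 + 1 = (i : ℤ) by ring]
        _ = ((U ^ ((i : ℤ) + 1) : Rˣ) : R) * M
            - (((i : ℤ) + 1 : ℤ) : ℚ) • ((U ^ ((i : ℤ) + 1 - 1) : Rˣ) : R) := by
            rw [show (i : ℤ) + 1 - 1 = (i : ℤ) by ring]
            push_cast
            module
  | pred i ih =>
      calc M * ((U ^ (-(i : ℤ) - 1) : Rˣ) : R)
          = M * ((U ^ (-(i : ℤ)) : Rˣ) : R) * ((U⁻¹ : Rˣ) : R) := by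
            rw [zpow_sub_one, Units.val_mul, mul_assoc]
        _ = (((U ^ (-(i : ℤ)) : Rˣ) : R) * M - ((-(i : ℤ) : ℤ) : ℚ) • ((U ^ (-(i : ℤ) - 1) : Rˣ) : R)) * ((U⁻¹ : Rˣ) : R) := by
            rw [ih]
        _ = ((U ^ (-(i : ℤ)) : Rˣ) : R) * (M * ((U⁻¹ : Rˣ) : R))
            - ((-(i : ℤ) : ℤ) : ℚ) • (((U ^ (-(i : ℤ) - 1) : Rˣ) : R) * ((U⁻¹ : Rˣ) : R)) := by
            rw [sub_mul, smul_mul_assoc, mul_assoc]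
        _ = ((U ^ (-(i : ℤ)) : Rˣ) : R) * ((U⁻¹ : Rˣ) : R) * M
            + ((U ^ (-(i : ℤ)) : Rˣ) : R) * ((U⁻¹ : Rˣ) : R) * ((U⁻¹ : Rˣ) : R)
            - ((-(i : ℤ) : ℤ) : ℚ) • (((U ^ (-(i : ℤ) - 1) : Rˣ) : R) * ((U⁻¹ : Rˣ) : R)) := by
            rw [hMUi]; noncomm_ring
        _ = ((U ^ (-(i : ℤ) - 1) : Rˣ) : R) * M
            + ((U ^ (-(i : ℤ) - 1 - 1) : Rˣ) : R)
            - ((-(i : ℤ) : ℤ) : ℚ) • ((U ^ (-(i : ℤ) - 1 - 1) : Rˣ) : R) := by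
            simp only [← Units.val_mul, ← zpow_sub_one]
        _ = ((U ^ (-(i : ℤ) - 1) : Rˣ) : R) * M
            - ((-(i : ℤ) - 1 : ℤ) : ℚ) • ((U ^ (-(i : ℤ) - 1 - 1) : Rˣ) : R) := by
            push_cast
            module

lemma weyl_comm_inv {R : Type*} [Ring R] [Algebra ℚ R] (U : Rˣ) (Mh : R)
    (h : ((U⁻¹ : Rˣ) : R) * Mh - Mh * ((U⁻¹ : Rˣ) : R) = 1) (m : ℤ) :
    Mh * ((U ^ m : Rˣ) : R) = ((U ^ m : Rˣ) : R) * Mh + (m : ℚ) • ((U ^ (m + 1) : Rˣ) : R) := by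
  have h2 := weyl_comm U⁻¹ Mh h (-m)
  rw [inv_zpow', neg_neg] at h2
  rw [show (-m - 1 : ℤ) = -(m + 1) by ring, inv_zpow', neg_neg] at h2
  rw [h2]
  push_cast
  module

lemma Bstep {R : Type*} [Ring R] [Algebra ℚ R]
    (n : ℤ) (hn : 3 ≤ n)
    (L Lh : Rˣ) (M Mh : R)
    (hLM : (L : R) * M - M * (L : R) = 1)
    (hLMh : ((Lh⁻¹ : Rˣ) : R) * Mh - Mh * ((Lh⁻¹ : Rˣ) : R) = 1)
    (hred : ((L ^ (2 * n - 2) : Rˣ) : R) = ((Lh ^ (2 : ℤ) : Rˣ) : R))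
    (B : ℤ → R)
    (hB : ∀ j : ℤ, B j =
      (4 * (n : ℚ) - 4)⁻¹ • (M * ((L ^ ((2 * n - 2) * j + 1) : Rˣ) : R)
          + ((L ^ ((2 * n - 2) * j) : Rˣ) : R) * M * (L : R))
      + (4 : ℚ)⁻¹ • (Mh * ((Lh ^ (2 * j - 1) : Rˣ) : R)
          + ((Lh ^ (2 * j) : Rˣ) : R) * Mh * ((Lh⁻¹ : Rˣ) : R)))
    (j : ℤ) :
    B (j + 1) = B j * ((L ^ (2 * n - 2) : Rˣ) : R) := by
  have hML : M * (L : R) = (L : R) * M - 1 := by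
    rw [sub_eq_iff_eq_add.mp hLM]; abel
  have hMLh : Mh * ((Lh⁻¹ : Rˣ) : R) = ((Lh⁻¹ : Rˣ) : R) * Mh - 1 := by
    rw [sub_eq_iff_eq_add.mp hLMh]; abel
  rw [hB (j + 1), hB j]
  set a : ℤ := 2 * n - 2 with ha
  have hu : (L ^ a : Rˣ) = Lh ^ (2 : ℤ) := Units.ext hred
  have hE : ((Lh ^ (2 * j + 2) : Rˣ) : R) = ((L ^ (a * j + a) : Rˣ) : R) := by
    congr 1
    rw [show (2 * j + 2 : ℤ) = 2 * (j + 1) by ring, zpow_mul, ← hu, ← zpow_mul,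
      show a * (j + 1) = a * j + a by ring]
  have t1 : M * ((L ^ (a * (j + 1) + 1) : Rˣ) : R)
      = ((L ^ (a * j + a + 1) : Rˣ) : R) * M
        - ((a * j + a + 1 : ℤ) : ℚ) • ((L ^ (a * j + a) : Rˣ) : R) := by
    rw [show a * (j + 1) + 1 = a * j + a + 1 by ring, weyl_comm L M hLM (a * j + a + 1),
      show a * j + a + 1 - 1 = a * j + a by ring]
  have t2 : ((L ^ (a * (j + 1)) : Rˣ) : R) * M * (L : R)
      = ((L ^ (a * j + a + 1) : Rˣ) : R) * M - ((L ^ (a * j + a) : Rˣ) : R) := by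
    rw [show a * (j + 1) = a * j + a by ring, mul_assoc, hML, mul_sub, mul_one,
      ← mul_assoc, ← Units.val_mul, ← zpow_add_one]
  have t3 : Mh * ((Lh ^ (2 * (j + 1) - 1) : Rˣ) : R)
      = ((Lh ^ (2 * j + 1) : Rˣ) : R) * Mh
        + ((2 * j + 1 : ℤ) : ℚ) • ((L ^ (a * j + a) : Rˣ) : R) := by
    rw [show 2 * (j + 1) - 1 = 2 * j + 1 by ring, weyl_comm_inv Lh Mh hLMh (2 * j + 1),
      show 2 * j + 1 + 1 = 2 * j + 2 by ring, hE]
  have t4 : ((Lh ^ (2 * (j + 1)) : Rˣ) : R) * Mh * ((Lh⁻¹ : Rˣ) : R)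
      = ((Lh ^ (2 * j + 1) : Rˣ) : R) * Mh - ((L ^ (a * j + a) : Rˣ) : R) := by
    rw [show 2 * (j + 1) = 2 * j + 2 by ring, mul_assoc, hMLh, mul_sub, mul_one,
      ← mul_assoc, ← Units.val_mul, ← zpow_sub_one,
      show 2 * j + 2 - 1 = 2 * j + 1 by ring, hE]
  have s1 : M * ((L ^ (a * j + 1) : Rˣ) : R) * ((L ^ a : Rˣ) : R)
      = ((L ^ (a * j + a + 1) : Rˣ) : R) * M
        - ((a * j + a + 1 : ℤ) : ℚ) • ((L ^ (a * j + a) : Rˣ) : R) := by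
    rw [mul_assoc, ← Units.val_mul, ← zpow_add, show a * j + 1 + a = a * j + a + 1 by ring,
      weyl_comm L M hLM (a * j + a + 1), show a * j + a + 1 - 1 = a * j + a by ring]
  have s2 : ((L ^ (a * j) : Rˣ) : R) * M * (L : R) * ((L ^ a : Rˣ) : R)
      = ((L ^ (a * j + a + 1) : Rˣ) : R) * M
        - ((1 + a : ℤ) : ℚ) • ((L ^ (a * j + a) : Rˣ) : R) := by
    rw [mul_assoc, mul_assoc, show (L : R) * ((L ^ a : Rˣ) : R) = ((L ^ (1 + a) : Rˣ) : R) by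
        rw [← Units.val_mul, ← zpow_one_add],
      weyl_comm L M hLM (1 + a), show 1 + a - 1 = a by ring]
    rw [mul_sub, ← mul_assoc, ← Units.val_mul, ← zpow_add,
      show a * j + (1 + a) = a * j + a + 1 by ring, mul_smul_comm, ← Units.val_mul, ← zpow_add,
      show a * j + a = a * j + a by rfl]
  have s3 : Mh * ((Lh ^ (2 * j - 1) : Rˣ) : R) * ((L ^ a : Rˣ) : R)
      = ((Lh ^ (2 * j + 1) : Rˣ) : R) * Mh
        + ((2 * j + 1 : ℤ) : ℚ) • ((L ^ (a * j + a) : Rˣ) : R) := by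
    rw [hred, mul_assoc, ← Units.val_mul, ← zpow_add, show 2 * j - 1 + 2 = 2 * j + 1 by ring,
      weyl_comm_inv Lh Mh hLMh (2 * j + 1), show 2 * j + 1 + 1 = 2 * j + 2 by ring, hE]
  have s4 : ((Lh ^ (2 * j) : Rˣ) : R) * Mh * ((Lh⁻¹ : Rˣ) : R) * ((L ^ a : Rˣ) : R)
      = ((Lh ^ (2 * j + 1) : Rˣ) : R) * Mh + ((L ^ (a * j + a) : Rˣ) : R) := by
    rw [hred, mul_assoc, mul_assoc, ← Units.val_mul, ← zpow_neg_one, ← zpow_add,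
      show (-1 + 2 : ℤ) = 1 by ring, ← mul_assoc,
      mul_assoc ((Lh ^ (2 * j) : Rˣ) : R) Mh, weyl_comm_inv Lh Mh hLMh 1]
    rw [mul_add, ← mul_assoc, ← Units.val_mul, ← zpow_add,
      show 2 * j + 1 = 2 * j + 1 by rfl, mul_smul_comm, ← Units.val_mul, ← zpow_add,
      show 2 * j + (1 + 1) = 2 * j + 2 by ring, hE]
    norm_num
  rw [add_mul, smul_mul_assoc, smul_mul_assoc, add_mul, add_mul, t1, t2, t3, t4, s1, s2, s3, s4]
  have hne : (4 * (n : ℚ) - 4) ≠ 0 := by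
    have h3 : (3 : ℚ) ≤ (n : ℚ) := by exact_mod_cast hn
    nlinarith
  have hne2 : (-4 + (n : ℚ) * 4) ≠ 0 := by intro h; apply hne; linarith
  match_scalars
  · ring
  · simp only [ha]
    push_cast
    have hne3 : (-1 + (n : ℚ)) ≠ 0 := by intro h; apply hne; linarith
    field_simp
    ring_nf
    field_simp
    ring
  · ring

/-- For every integer `j ≥ -1`, `B j = B (-1) * 𝓛^(j+1)` where `𝓛 = L^(2n-2) = L̂²`. -/
theorem Bj_eq_Bneg1_mul_Lax_pow {R : Type*} [Ring R] [Algebra ℚ R]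
    (n : ℤ) (hn : 3 ≤ n)
    (L Lh : Rˣ) (M Mh : R)
    (hLM : (L : R) * M - M * (L : R) = 1)
    (hLMh : ((Lh⁻¹ : Rˣ) : R) * Mh - Mh * ((Lh⁻¹ : Rˣ) : R) = 1)
    (hred : ((L ^ (2 * n - 2) : Rˣ) : R) = ((Lh ^ (2 : ℤ) : Rˣ) : R))
    (B : ℤ → R)
    (hB : ∀ j : ℤ, B j =
      (4 * (n : ℚ) - 4)⁻¹ • (M * ((L ^ ((2 * n - 2) * j + 1) : Rˣ) : R)
          + ((L ^ ((2 * n - 2) * j) : Rˣ) : R) * M * (L : R))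
      + (4 : ℚ)⁻¹ • (Mh * ((Lh ^ (2 * j - 1) : Rˣ) : R)
          + ((Lh ^ (2 * j) : Rˣ) : R) * Mh * ((Lh⁻¹ : Rˣ) : R)))
    (j : ℤ) (hj : -1 ≤ j) :
    B j = B (-1) * (((L ^ (2 * n - 2)) ^ (j + 1) : Rˣ) : R) := by
  refine Int.le_induction (motive := fun k _ => B k = B (-1) * (((L ^ (2 * n - 2)) ^ (k + 1) : Rˣ) : R)) ?_ ?_ j hj
  · show B (-1) = B (-1) * (((L ^ (2 * n - 2)) ^ ((-1 : ℤ) + 1) : Rˣ) : R)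
    rw [show (-1 : ℤ) + 1 = 0 by ring, zpow_zero, Units.val_one, mul_one]
  · intro j _ ih
    show B (j + 1) = B (-1) * (((L ^ (2 * n - 2)) ^ (j + 1 + 1) : Rˣ) : R)
    rw [Bstep n hn L Lh M Mh hLM hLMh hred B hB j, ih, mul_assoc,
      ← Units.val_mul, ← zpow_add_one]
end

section
/- If in addition B_{−1} = L, then for every integer j ≥ −1 one has B_j = L^{(2n−2)(j+1)+1}. (This is the algebraic identity underlying the derivation of the Virasoro constraints from the string equation for the Drinfeld–Sokolov hierarchy of type D_n.) -/
lemma upow_aux {R : Type*} [Ring R] (U : Rˣ) (a b : ℤ) :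
    ((U^a : Rˣ) : R) * ((U^b : Rˣ) : R) = ((U^(a+b) : Rˣ) : R) := by
  rw [← Units.val_mul, ← zpow_add]

lemma zpc_aux {R : Type*} [Ring R] (U : Rˣ) {a b : ℤ} (h : a = b) :
    ((U^a : Rˣ) : R) = ((U^b : Rˣ) : R) := by rw [h]

lemma key_aux {R : Type*} [Ring R] (U : Rˣ) (M : R) (h : (U:R)*M - M*(U:R) = 1) :
    ∀ k : ℤ, M * ((U^k : Rˣ) : R) = ((U^k : Rˣ) : R) * M - k • ((U^(k-1) : Rˣ) : R) := by
  have hMU : M * ((U^(1:ℤ):Rˣ):R) = ((U^(1:ℤ):Rˣ):R)*M - 1 := by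
    rw [zpow_one, ← h]; noncomm_ring
  have hMUi : M * ((U^(-1:ℤ):Rˣ):R)
      = ((U^(-1:ℤ):Rˣ):R)*M + ((U^(-2:ℤ):Rˣ):R) := by
    have h2 := congrArg (fun x => ((U⁻¹:Rˣ):R) * x * ((U⁻¹:Rˣ):R)) h
    simp only [mul_sub, sub_mul, mul_one, mul_assoc, Units.inv_mul_cancel_left,
      Units.mul_inv_cancel_left, Units.mul_inv, Units.inv_mul] at h2
    have h3 : ((U^(-2:ℤ):Rˣ):R) = ((U⁻¹:Rˣ):R) * ((U⁻¹:Rˣ):R) := by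
      rw [show (-2:ℤ) = (-1) + (-1) by norm_num, zpow_add, zpow_neg_one, Units.val_mul]
    rw [zpow_neg_one, h3]
    rw [sub_eq_iff_eq_add] at h2
    rw [h2, add_comm]
  intro k
  induction k using Int.induction_on with
  | zero => simp
  | succ i ih =>
    have c1 : ((i:ℤ)+1-1) = (i:ℤ) := by ring
    have c2 : ((i:ℤ)-1+1) = (i:ℤ) := by ring
    calc M * ((U^((i:ℤ)+1):Rˣ):R)
        = (M * ((U^(i:ℤ):Rˣ):R)) * ((U^(1:ℤ):Rˣ):R) := by
          rw [mul_assoc, upow_aux]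
      _ = ((U^(i:ℤ):Rˣ):R) * (M * ((U^(1:ℤ):Rˣ):R))
          - (i:ℤ) • (((U^((i:ℤ)-1):Rˣ):R) * ((U^(1:ℤ):Rˣ):R)) := by
          rw [ih, sub_mul, smul_mul_assoc, mul_assoc]
      _ = ((U^(i:ℤ):Rˣ):R) * (((U^(1:ℤ):Rˣ):R) * M) - ((U^(i:ℤ):Rˣ):R)
          - (i:ℤ) • ((U^(i:ℤ):Rˣ):R) := by
          rw [hMU, upow_aux, c2, mul_sub, mul_one]
      _ = ((U^((i:ℤ)+1):Rˣ):R) * M - ((i:ℤ)+1) • ((U^((i:ℤ)+1-1):Rˣ):R) := by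
          rw [← mul_assoc, upow_aux, c1, add_smul, one_smul]; module
  | pred i ih =>
    have c1 : (-(i:ℤ)-1-1) = (-(i:ℤ)-2) := by ring
    have c2 : (-(i:ℤ)-1+(-1)) = (-(i:ℤ)-2) := by ring
    have c3 : (-(i:ℤ)+(-1)) = (-(i:ℤ)-1) := by ring
    have c4 : (-(i:ℤ)+(-2)) = (-(i:ℤ)-2) := by ring
    calc M * ((U^(-(i:ℤ)-1):Rˣ):R)
        = (M * ((U^(-(i:ℤ)):Rˣ):R)) * ((U^(-1:ℤ):Rˣ):R) := by
          rw [mul_assoc, upow_aux, c3]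
      _ = ((U^(-(i:ℤ)):Rˣ):R) * (M * ((U^(-1:ℤ):Rˣ):R))
          - (-(i:ℤ)) • (((U^(-(i:ℤ)-1):Rˣ):R) * ((U^(-1:ℤ):Rˣ):R)) := by
          rw [ih, sub_mul, smul_mul_assoc, mul_assoc]
      _ = ((U^(-(i:ℤ)-1):Rˣ):R) * M + ((U^(-(i:ℤ)-2):Rˣ):R)
          - (-(i:ℤ)) • ((U^(-(i:ℤ)-2):Rˣ):R) := by
          rw [hMUi, mul_add, ← mul_assoc, upow_aux, c3, upow_aux, c4, upow_aux, c2]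
      _ = ((U^(-(i:ℤ)-1):Rˣ):R) * M - (-(i:ℤ)-1) • ((U^(-(i:ℤ)-1-1):Rˣ):R) := by
          rw [c1, sub_smul, one_smul]; module

/-- If in addition `B (-1) = L`, then for every integer `j ≥ -1`,
`B j = L^((2n-2)(j+1)+1)`. -/
theorem Bj_eq_L_pow_of_string {R : Type*} [Ring R] [Algebra ℚ R]
    (n : ℤ) (hn : 3 ≤ n)
    (L Lh : Rˣ) (M Mh : R)
    (hLM : (L : R) * M - M * (L : R) = 1)
    (hLMh : ((Lh⁻¹ : Rˣ) : R) * Mh - Mh * ((Lh⁻¹ : Rˣ) : R) = 1)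
    (hred : ((L ^ (2 * n - 2) : Rˣ) : R) = ((Lh ^ (2 : ℤ) : Rˣ) : R))
    (B : ℤ → R)
    (hB : ∀ j : ℤ, B j =
      (4 * (n : ℚ) - 4)⁻¹ • (M * ((L ^ ((2 * n - 2) * j + 1) : Rˣ) : R)
          + ((L ^ ((2 * n - 2) * j) : Rˣ) : R) * M * (L : R))
      + (4 : ℚ)⁻¹ • (Mh * ((Lh ^ (2 * j - 1) : Rˣ) : R)
          + ((Lh ^ (2 * j) : Rˣ) : R) * Mh * ((Lh⁻¹ : Rˣ) : R)))
    (hstr : B (-1) = (L : R))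
    (j : ℤ) (hj : -1 ≤ j) :
    B j = ((L ^ ((2 * n - 2) * (j + 1) + 1) : Rˣ) : R) := by
  have hq : (4 * (n : ℚ) - 4) ≠ 0 := by
    have h3 : (3:ℚ) ≤ (n:ℚ) := by exact_mod_cast hn
    intro hc; linarith
  have cL := key_aux L M hLM
  have cLh : ∀ k : ℤ, Mh * ((Lh^k : Rˣ) : R)
      = ((Lh^k : Rˣ) : R) * Mh + k • ((Lh^(k+1) : Rˣ) : R) := by
    intro k
    have h := key_aux Lh⁻¹ Mh hLMh (-k)
    rw [inv_zpow', inv_zpow'] at h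
    simp only [neg_neg] at h
    rw [show -(-k-1) = k+1 by ring] at h
    rw [h, neg_smul, sub_neg_eq_add]
  have hU : L ^ (2*n-2) = Lh ^ (2:ℤ) := Units.ext hred
  have hLL : ∀ k : ℤ, ((Lh^(2*k) : Rˣ) : R) = ((L^((2*n-2)*k) : Rˣ) : R) := by
    intro k
    rw [zpow_mul Lh 2 k, ← hU, ← zpow_mul]
  -- generic product forms
  have pgen : ∀ a : ℤ, ((L^a:Rˣ):R) * M * (L:R)
      = ((L^(a+1):Rˣ):R) * M - ((L^a:Rˣ):R) := by
    intro a
    have q : M * (L:R) = (L:R)*M - 1 := by rw [← hLM]; noncomm_ring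
    rw [mul_assoc, q, mul_sub, mul_one, ← mul_assoc,
      show (L:R) = ((L^(1:ℤ):Rˣ):R) by rw [zpow_one], upow_aux]
  have pgen' : ∀ a : ℤ, ((Lh^a:Rˣ):R) * Mh * ((Lh⁻¹:Rˣ):R)
      = ((Lh^(a-1):Rˣ):R) * Mh - ((Lh^a:Rˣ):R) := by
    intro a
    have q : Mh * ((Lh⁻¹:Rˣ):R) = ((Lh⁻¹:Rˣ):R)*Mh - 1 := by rw [← hLMh]; noncomm_ring
    rw [mul_assoc, q, mul_sub, mul_one, ← mul_assoc,
      show ((Lh⁻¹:Rˣ):R) = ((Lh^(-1:ℤ):Rˣ):R) by rw [zpow_neg_one], upow_aux,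
      zpc_aux Lh (show a + (-1) = a - 1 by ring)]
  have p1 := cL ((2*n-2)*j+1)
  rw [zpc_aux L (show (2*n-2)*j+1-1 = (2*n-2)*j by ring)] at p1
  have p1' := cL ((2*n-2)*(-1)+1)
  rw [zpc_aux L (show (2*n-2)*(-1)+1-1 = (2*n-2)*(-1) by ring)] at p1'
  have p3 := cLh (2*j-1)
  rw [zpc_aux Lh (show 2*j-1+1 = 2*j by ring)] at p3
  have p3' := cLh (2*(-1)-1)
  rw [zpc_aux Lh (show 2*(-1)-1+1 = 2*(-1) by ring)] at p3'
  -- the multiplier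
  set Z : R := ((L^((2*n-2)*j+(2*n-2)):Rˣ):R) with hZdef
  have hZ : Z = ((Lh^(2*j+2):Rˣ):R) := by
    rw [hZdef, zpc_aux L (show (2*n-2)*j+(2*n-2) = (2*n-2)*(j+1) by ring), ← hLL (j+1),
      zpc_aux Lh (show 2*(j+1) = 2*j+2 by ring)]
  have q1 : (((L^((2*n-2)*(-1)+1):Rˣ):R) * M) * Z
      = ((L^((2*n-2)*j+1):Rˣ):R) * M - ((2*n-2)*j+(2*n-2)) • ((L^((2*n-2)*j):Rˣ):R) := by
    rw [hZdef, mul_assoc, cL ((2*n-2)*j+(2*n-2)), mul_sub, ← mul_assoc, upow_aux,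
      zpc_aux L (show (2*n-2)*(-1)+1 + ((2*n-2)*j+(2*n-2)) = (2*n-2)*j+1 by ring),
      mul_smul_comm, upow_aux,
      zpc_aux L (show (2*n-2)*(-1)+1 + ((2*n-2)*j+(2*n-2)-1) = (2*n-2)*j by ring)]
  have q2 : ((L^((2*n-2)*(-1)):Rˣ):R) * Z = ((L^((2*n-2)*j):Rˣ):R) := by
    rw [hZdef, upow_aux,
      zpc_aux L (show (2*n-2)*(-1) + ((2*n-2)*j+(2*n-2)) = (2*n-2)*j by ring)]
  have q3 : (((Lh^((2*(-1)-1 : ℤ)):Rˣ):R) * Mh) * Z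
      = ((Lh^(2*j-1):Rˣ):R) * Mh + (2*j+2) • ((Lh^(2*j):Rˣ):R) := by
    rw [hZ, mul_assoc, cLh (2*j+2), mul_add, ← mul_assoc, upow_aux,
      zpc_aux Lh (show 2*(-1)-1 + (2*j+2) = 2*j-1 by ring),
      mul_smul_comm, upow_aux,
      zpc_aux Lh (show 2*(-1)-1 + (2*j+2+1) = 2*j by ring)]
  have hLZ : (L:R) * Z = ((L^((2*n-2)*(j+1)+1):Rˣ):R) := by
    rw [hZdef, show (L:R) = ((L^(1:ℤ):Rˣ):R) by rw [zpow_one], upow_aux,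
      zpc_aux L (show 1 + ((2*n-2)*j+(2*n-2)) = (2*n-2)*(j+1)+1 by ring)]
  -- expand the string equation
  have hE := hstr
  rw [hB (-1), p1', pgen ((2*n-2)*(-1)), p3', pgen' (2*(-1)), hLL (-1)] at hE
  have hE2 := congrArg (fun x : R => x * Z) hE
  have dadd : ∀ x y z : R, (x+y)*z = x*z+y*z := fun x y z => add_mul x y z
  have dsub : ∀ x y z : R, (x-y)*z = x*z-y*z := fun x y z => sub_mul x y z
  have dsq : ∀ (c : ℚ) (x z : R), (c•x)*z = c•(x*z) := fun c x z => smul_mul_assoc c x z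
  have dsz : ∀ (c : ℤ) (x z : R), (c•x)*z = c•(x*z) := fun c x z => smul_mul_assoc c x z
  simp only [dadd, dsub, dsq, dsz] at hE2
  rw [q1, q2, q3, hLZ] at hE2
  rw [hLL j] at hE2
  -- expand the goal
  rw [hB j, p1, pgen ((2*n-2)*j), p3, pgen' (2*j), hLL j, ← hE2]
  have hq1 : (n : ℚ) - 1 ≠ 0 := fun h => hq (by linear_combination 4 * h)
  have hq2 : -1 + (n : ℚ) ≠ 0 := fun h => hq (by linear_combination 4 * h)
  match_scalars <;> (push_cast; field_simp; try ring)
end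

section
/- For all integers i, j ≥ −1 with i + j ≥ −1, the operators L̃_j = V_j − ∂/∂t_{(2n−2)(j+1)+1} satisfy the Virasoro commutation relation [L̃_i, L̃_j] = (i−j)·L̃_{i+j} + δ_{i+j,0}·(n/12)·(i³−i)·Id as linear operators on P. (These are the operators appearing in the Virasoro constraints L̃_j τ = 0 for solutions of the Drinfeld–Sokolov hierarchy of type D_n satisfying the string equation.) -/
open MvPolynomial

noncomputable section

/-- The polynomial algebra over ℚ in variables `t_{2m+1}` (index `(false, m)`) and
`t̂_{2m+1}` (index `(true, m)`). -/
abbrev PP : Type := MvPolynomial (Bool × ℕ) ℚ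

/-- The operator `p_k` (for `b = false`) resp. `p̂_k` (for `b = true`):
`2·∂/∂t_k` for odd positive `k`, multiplication by `(-k)·t_{-k}` for odd negative `k`,
and `0` for even `k`. -/
def pOp (b : Bool) (k : ℤ) : PP → PP := fun q =>
  if 0 < k ∧ Odd k then (2 : ℚ) • pderiv (b, (k.toNat - 1) / 2) q
  else if k < 0 ∧ Odd k then ((-k : ℤ) : ℚ) • (X (b, ((-k).toNat - 1) / 2) * q)
  else 0

/-- The normal-ordered product `:p_a p_c:`, equal to `p_c ∘ p_a` if `a > 0 > c`
and `p_a ∘ p_c` otherwise. -/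
def nord (b : Bool) (a c : ℤ) : PP → PP :=
  if 0 < a ∧ c < 0 then fun q => pOp b c (pOp b a q) else fun q => pOp b a (pOp b c q)


lemma pderiv_pderiv_comm (v w : Bool × ℕ) (p : PP) :
    pderiv v (pderiv w p) = pderiv w (pderiv v p) := by
  induction p using MvPolynomial.induction_on' with
  | add p q hp hq => simp only [map_add, hp, hq]
  | monomial d c =>
    rw [pderiv_monomial, pderiv_monomial, pderiv_monomial, pderiv_monomial]
    by_cases hvw : v = w
    · subst hvw; rfl
    · rw [tsub_right_comm]
      congr 1
      rw [Finsupp.tsub_apply, Finsupp.tsub_apply, Finsupp.single_apply, Finsupp.single_apply]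
      rw [if_neg (Ne.symm hvw), if_neg hvw]
      simp only [tsub_zero]
      ring


lemma pOp_not_odd {b : Bool} {k : ℤ} (h : ¬ Odd k) (q : PP) : pOp b k q = 0 := by
  simp [pOp, h]

lemma pOp_zero (b : Bool) (k : ℤ) : pOp b k (0 : PP) = 0 := by
  unfold pOp; split_ifs <;> simp

lemma odd_pos_var {k : ℤ} (hk : 0 < k) (ho : Odd k) :
    (2 * ((k.toNat - 1) / 2 : ℕ) + 1 : ℤ) = k := by
  obtain ⟨m, hm⟩ := ho
  omega

lemma pOp_comm_pos_neg {b b' : Bool} {a c : ℤ} (ha : 0 < a) (hc : c < 0) (q : PP) :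
    pOp b a (pOp b' c q) =
      pOp b' c (pOp b a q)
      + (if b = b' ∧ a + c = 0 ∧ Odd a then ((2 * a : ℤ) : ℚ) else 0) • q := by
  by_cases hoa : Odd a
  · by_cases hoc : Odd c
    · simp only [pOp, if_pos (⟨ha, hoa⟩ : 0 < a ∧ Odd a), if_pos (⟨hc, hoc⟩ : c < 0 ∧ Odd c),
        if_neg (by omega : ¬ (0 < c ∧ Odd c)), if_neg (by omega : ¬ (a < 0 ∧ Odd a))]
      set u : Bool × ℕ := (b, (a.toNat - 1) / 2) with hu
      set v : Bool × ℕ := (b', ((-c).toNat - 1) / 2) with hv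
      have hXv : pderiv u (X v : PP) = if u = v then 1 else 0 := by
        by_cases h : u = v
        · rw [h]; simp [pderiv_X_self]
        · simp [pderiv_X_of_ne (Ne.symm h), h]
      have hder : pderiv u (((-c : ℤ) : ℚ) • (X v * q))
          = ((-c : ℤ) : ℚ) • ((if u = v then q else 0) + X v * pderiv u q) := by
        rw [Derivation.map_smul, pderiv_mul, hXv]
        split_ifs <;> simp
      rw [hder]
      have hcond : (u = v) ↔ (b = b' ∧ a + c = 0 ∧ Odd a) := by
        constructor
        · rintro h
          have hb : b = b' := congrArg Prod.fst h
          have hm : (a.toNat - 1) / 2 = ((-c).toNat - 1) / 2 := congrArg Prod.snd h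
          refine ⟨hb, ?_, hoa⟩
          have e1 := odd_pos_var ha hoa
          have e2 := odd_pos_var (by omega : (0:ℤ) < -c) (by simpa using hoc.neg)
          omega
        · rintro ⟨hb, hac, -⟩
          have : -c = a := by omega
          rw [hu, hv, hb, this]
      rw [mul_smul_comm]
      by_cases h : u = v
      · rw [if_pos h, if_pos (hcond.mp h)]
        have hac : a + c = 0 := (hcond.mp h).2.1
        have h1 : ((-c : ℤ) : ℚ) = ((a : ℤ) : ℚ) := by
          have : -c = a := by omega
          rw [this]
        rw [h1]
        have h2 : ((2 * a : ℤ) : ℚ) = 2 * ((a : ℤ) : ℚ) := by push_cast; ring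
        rw [h2]
        module
      · rw [if_neg h, if_neg (fun hh => h (hcond.mpr hh))]
        module
    · rw [pOp_not_odd hoc, pOp_not_odd hoc, pOp_zero,
        if_neg (by rintro ⟨-, hac, hoa'⟩; exact hoc (by rw [show c = -a by omega]; exact hoa'.neg))]
      simp [pOp]
  · rw [pOp_not_odd hoa, pOp_not_odd hoa, pOp_zero, if_neg (by tauto)]
    simp

lemma pOp_comm (b b' : Bool) (a c : ℤ) (q : PP) :
    pOp b a (pOp b' c q) =
      pOp b' c (pOp b a q)
      + (if b = b' ∧ a + c = 0 ∧ Odd a then ((2 * a : ℤ) : ℚ) else 0) • q := by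
  by_cases hoa : Odd a
  · by_cases hoc : Odd c
    · have ha0 : a ≠ 0 := by rintro rfl; exact (by simpa using hoa)
      have hc0 : c ≠ 0 := by rintro rfl; exact (by simpa using hoc)
      rcases lt_or_gt_of_ne ha0 with ha | ha <;> rcases lt_or_gt_of_ne hc0 with hc | hc
      · -- both negative: multiplications commute
        simp only [pOp, if_neg (by omega : ¬ (0 < a ∧ Odd a)),
          if_neg (by omega : ¬ (0 < c ∧ Odd c)), if_pos (⟨ha, hoa⟩ : a < 0 ∧ Odd a),
          if_pos (⟨hc, hoc⟩ : c < 0 ∧ Odd c), if_neg (by omega : ¬ (b = b' ∧ a + c = 0 ∧ Odd a))]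
        rw [mul_smul_comm, mul_smul_comm, mul_left_comm, zero_smul, add_zero, smul_comm]
      · -- a < 0 < c : use the pos-neg lemma with roles swapped
        have h := pOp_comm_pos_neg (b := b') (b' := b) hc ha q
        have hκ : (if b' = b ∧ c + a = 0 ∧ Odd c then ((2 * c : ℤ) : ℚ) else 0) • q
            = - ((if b = b' ∧ a + c = 0 ∧ Odd a then ((2 * a : ℤ) : ℚ) else 0) • q) := by
          by_cases hh : b = b' ∧ a + c = 0 ∧ Odd a
          · rw [if_pos hh, if_pos ⟨hh.1.symm, by omega, hoc⟩]
            rw [← neg_smul]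
            congr 1
            push_cast
            have : c = -a := by omega
            rw [this]; push_cast; ring
          · rw [if_neg hh, if_neg (by rintro ⟨h1, h2, -⟩; exact hh ⟨h1.symm, by omega, hoa⟩)]
            simp
        rw [hκ] at h
        rw [h]; abel
      · exact pOp_comm_pos_neg ha hc q
      · -- both positive: derivatives commute
        simp only [pOp, if_pos (⟨ha, hoa⟩ : 0 < a ∧ Odd a), if_pos (⟨hc, hoc⟩ : 0 < c ∧ Odd c),
          if_neg (by omega : ¬ (b = b' ∧ a + c = 0 ∧ Odd a)), zero_smul, add_zero]
        simp only [Derivation.map_smul]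
        rw [pderiv_pderiv_comm]
    · rw [pOp_not_odd hoc, pOp_not_odd hoc, pOp_zero,
        if_neg (by rintro ⟨-, hac, hoa'⟩; exact hoc (by simpa [show c = -a by omega] using hoa'.neg))]
      simp
  · rw [pOp_not_odd hoa, pOp_not_odd hoa, pOp_zero, if_neg (by tauto)]
    simp

lemma vars_pderiv_subset (v : Bool × ℕ) (p : PP) : (pderiv v p).vars ⊆ p.vars := by
  classical
  conv_lhs => rw [p.as_sum]
  rw [map_sum]
  refine (vars_sum_subset _ _).trans ?_
  intro x hx
  rw [Finset.mem_biUnion] at hx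
  obtain ⟨d, hd, hxd⟩ := hx
  rw [pderiv_monomial] at hxd
  have h1 : ((monomial (d - Finsupp.single v 1)) (coeff d p * (d v : ℚ))).vars
      ⊆ (d - Finsupp.single v 1).support := by
    by_cases h : coeff d p * (d v : ℚ) = 0
    · simp [h]
    · rw [vars_monomial h]
  have hx2 := h1 hxd
  rw [Finsupp.mem_support_iff] at hx2
  rw [mem_vars]
  refine ⟨d, hd, ?_⟩
  rw [Finsupp.mem_support_iff]
  rw [Finsupp.tsub_apply] at hx2
  omega

def Bdd (B : ℤ) (q : PP) : Prop := ∀ v ∈ q.vars, 2 * (v.2 : ℤ) + 1 ≤ B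

lemma Bdd.mono {B B' : ℤ} {q : PP} (h : Bdd B q) (hB : B ≤ B') : Bdd B' q :=
  fun v hv => le_trans (h v hv) hB

lemma exists_bdd (q : PP) : ∃ B : ℤ, 1 ≤ B ∧ Bdd B q := by
  classical
  refine ⟨(q.vars.sup fun v => 2 * v.2 + 1 : ℕ) + 1, by omega, fun v hv => ?_⟩
  have h2 : 2 * v.2 + 1 ≤ q.vars.sup fun v => 2 * v.2 + 1 := by
    have := Finset.le_sup (f := fun v : Bool × ℕ => 2 * v.2 + 1) hv
    simpa using this
  push_cast
  omega

lemma Bdd.zero (B : ℤ) : Bdd B (0 : PP) := by intro v hv; simp at hv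

lemma Bdd.add {B : ℤ} {x y : PP} (hx : Bdd B x) (hy : Bdd B y) : Bdd B (x + y) := by
  intro v hv
  rcases Finset.mem_union.mp (vars_add_subset x y hv) with h | h
  exacts [hx v h, hy v h]

lemma Bdd.smul {B : ℤ} {x : PP} (c : ℚ) (hx : Bdd B x) : Bdd B (c • x) := by
  by_cases hc : c = 0
  · subst hc; simpa using Bdd.zero B
  · intro v hv
    rw [smul_eq_C_mul, vars_C_mul _ hc] at hv
    exact hx v hv

lemma Bdd.sum {B : ℤ} {ι : Type*} {s : Finset ι} {f : ι → PP}
    (h : ∀ i ∈ s, Bdd B (f i)) : Bdd B (∑ i ∈ s, f i) := by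
  classical
  induction s using Finset.induction_on with
  | empty => simpa using Bdd.zero B
  | insert _ _ hne ih =>
    rw [Finset.sum_insert hne]
    exact (h _ (Finset.mem_insert_self _ _)).add
      (ih fun i hi => h i (Finset.mem_insert_of_mem hi))




lemma pOp_add (b : Bool) (k : ℤ) (x y : PP) : pOp b k (x + y) = pOp b k x + pOp b k y := by
  unfold pOp; split_ifs <;> simp [mul_add, smul_add]

lemma pOp_smul (b : Bool) (k : ℤ) (c : ℚ) (x : PP) : pOp b k (c • x) = c • pOp b k x := by
  unfold pOp; split_ifs <;> simp [smul_comm c, mul_smul_comm]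

lemma pOp_sub (b : Bool) (k : ℤ) (x y : PP) : pOp b k (x - y) = pOp b k x - pOp b k y := by
  have h : x - y = x + (-1 : ℚ) • y := by module
  rw [h, pOp_add, pOp_smul]
  module

lemma pOp_sum (b : Bool) (k : ℤ) {ι : Type*} (s : Finset ι) (f : ι → PP) :
    pOp b k (∑ i ∈ s, f i) = ∑ i ∈ s, pOp b k (f i) := by
  classical
  induction s using Finset.induction_on with
  | empty => simpa using pOp_zero b k
  | insert _ _ h ih => rw [Finset.sum_insert h, Finset.sum_insert h, pOp_add, ih]

lemma bdd_pOp {B : ℤ} {q : PP} (h : Bdd B q) (b : Bool) {k : ℤ} (hk : -k ≤ B) :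
    Bdd B (pOp b k q) := by
  unfold pOp
  split_ifs with h1 h2
  · exact Bdd.smul _ (fun v hv => h v (vars_pderiv_subset _ _ hv))
  · refine Bdd.smul _ ?_
    intro v hv
    rcases Finset.mem_union.mp (vars_mul _ _ hv) with hx | hx
    · rw [vars_X] at hx
      rw [Finset.mem_singleton] at hx
      subst hx
      have := odd_pos_var (k := -k) (by omega) (by simpa using h2.2.neg)
      simp only
      omega
    · exact h v hx
  · exact Bdd.zero B

lemma pOp_vanish {B : ℤ} {q : PP} (h : Bdd B q) (b : Bool) {k : ℤ} (hk : B < k) (hB : 0 ≤ B) :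
    pOp b k q = 0 := by
  unfold pOp
  split_ifs with h1 h2
  · rw [pderiv_eq_zero_of_notMem_vars, smul_zero]
    intro hv
    have := h _ hv
    have := odd_pos_var h1.1 h1.2
    omega
  · omega
  · rfl



lemma nord_pos_neg {a c : ℤ} (h : 0 < a) (h' : c < 0) (b : Bool) (q : PP) :
    nord b a c q = pOp b c (pOp b a q) := by
  rw [nord, if_pos ⟨h, h'⟩]

lemma nord_other {a c : ℤ} (h : ¬ (0 < a ∧ c < 0)) (b : Bool) (q : PP) :
    nord b a c q = pOp b a (pOp b c q) := by
  rw [nord, if_neg h]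

lemma nord_add (b : Bool) (a c : ℤ) (x y : PP) :
    nord b a c (x + y) = nord b a c x + nord b a c y := by
  unfold nord; split_ifs <;> simp [pOp_add]

lemma nord_smul (b : Bool) (a c : ℤ) (r : ℚ) (x : PP) :
    nord b a c (r • x) = r • nord b a c x := by
  unfold nord; split_ifs <;> simp [pOp_smul]

lemma nord_zero (b : Bool) (a c : ℤ) : nord b a c (0 : PP) = 0 := by
  unfold nord; split_ifs <;> simp [pOp_zero]

lemma nord_sum (b : Bool) (a c : ℤ) {ι : Type*} (s : Finset ι) (f : ι → PP) :
    nord b a c (∑ i ∈ s, f i) = ∑ i ∈ s, nord b a c (f i) := by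
  unfold nord; split_ifs <;> simp [pOp_sum]

lemma nord_vanish {B : ℤ} {q : PP} (h : Bdd B q) (hB : 0 ≤ B) (b : Bool) {S i : ℤ}
    (hi : i ∉ Finset.Icc (S - B) B) : nord b i (S - i) q = 0 := by
  rw [Finset.mem_Icc] at hi
  push_neg at hi
  by_cases h1 : 0 < i ∧ S - i < 0
  · rw [nord_pos_neg h1.1 h1.2, pOp_vanish h b (by omega) hB, pOp_zero]
  · rw [nord_other h1]
    by_cases h2 : B < S - i
    · rw [pOp_vanish h b h2 hB, pOp_zero]
    · have hiB : B < i := by omega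
      have hSi : 0 ≤ S - i := by omega
      refine pOp_vanish (B := B) ?_ b hiB hB
      exact (bdd_pOp h b (by omega))

lemma bdd_nord {B : ℤ} {q : PP} (h : Bdd B q) (hB : 0 ≤ B) (b : Bool) (S i : ℤ) :
    Bdd (B + |S|) (nord b i (S - i) q) := by
  by_cases hi : i ∈ Finset.Icc (S - B) B
  · rw [Finset.mem_Icc] at hi
    have hS : |S| ≥ 0 := abs_nonneg S
    have h' : Bdd (B + |S|) q := h.mono (by omega)
    have habs : S ≤ |S| ∧ -S ≤ |S| := ⟨le_abs_self S, neg_le_abs S⟩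
    have h1 : -i ≤ B + |S| := by omega
    have h2 : -(S - i) ≤ B + |S| := by omega
    by_cases hc : 0 < i ∧ S - i < 0
    · rw [nord_pos_neg hc.1 hc.2]
      exact bdd_pOp (bdd_pOp h' b h1) b h2
    · rw [nord_other hc]
      exact bdd_pOp (bdd_pOp h' b h2) b h1
  · rw [nord_vanish h hB b hi]
    exact Bdd.zero _

def Aop (b : Bool) (S : ℤ) (q : PP) : PP := ∑ᶠ i : ℤ, nord b i (S - i) q

lemma Aop_eq_sum {B : ℤ} {q : PP} (h : Bdd B q) (hB : 0 ≤ B) (b : Bool) (S : ℤ)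
    {I : Finset ℤ} (hI : Finset.Icc (S - B) B ⊆ I) :
    Aop b S q = ∑ i ∈ I, nord b i (S - i) q := by
  refine finsum_eq_sum_of_support_subset _ ?_
  intro i hi
  by_contra hiI
  exact hi (nord_vanish h hB b (fun hmem => hiI (hI hmem)))

lemma bdd_Aop {B : ℤ} {q : PP} (h : Bdd B q) (hB : 0 ≤ B) (b : Bool) (S : ℤ) :
    Bdd (B + |S|) (Aop b S q) := by
  rw [Aop_eq_sum h hB b S (Finset.Subset.refl _)]
  exact Bdd.sum fun i _ => bdd_nord h hB b S i

lemma Aop_add (b : Bool) (S : ℤ) (x y : PP) : Aop b S (x + y) = Aop b S x + Aop b S y := by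
  obtain ⟨Bx, hBx1, hBx⟩ := exists_bdd x
  obtain ⟨By, hBy1, hBy⟩ := exists_bdd y
  set B := max Bx By with hB
  have hx : Bdd B x := hBx.mono (le_max_left _ _)
  have hy : Bdd B y := hBy.mono (le_max_right _ _)
  have hB0 : (0:ℤ) ≤ B := by omega
  rw [Aop_eq_sum (hx.add hy) hB0 b S (Finset.Subset.refl _),
    Aop_eq_sum hx hB0 b S (Finset.Subset.refl _), Aop_eq_sum hy hB0 b S (Finset.Subset.refl _),
    ← Finset.sum_add_distrib]
  exact Finset.sum_congr rfl fun i _ => nord_add b i (S - i) x y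

lemma Aop_smul (b : Bool) (S : ℤ) (r : ℚ) (x : PP) : Aop b S (r • x) = r • Aop b S x := by
  obtain ⟨B, hB1, hB⟩ := exists_bdd x
  have hB0 : (0:ℤ) ≤ B := by omega
  rw [Aop_eq_sum (hB.smul r) hB0 b S (Finset.Subset.refl _),
    Aop_eq_sum hB hB0 b S (Finset.Subset.refl _), Finset.smul_sum]
  exact Finset.sum_congr rfl fun i _ => nord_smul b i (S - i) r x

lemma Aop_zero (b : Bool) (S : ℤ) : Aop b S (0 : PP) = 0 := by
  have h : Aop b S (0 : PP) = ∑ i ∈ Finset.Icc (S - 1) 1, nord b i (S - i) (0:PP) :=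
    Aop_eq_sum (Bdd.zero 1) (by norm_num) b S (Finset.Subset.refl _)
  rw [h]
  simp [nord_zero]

lemma Aop_sum (b : Bool) (S : ℤ) {ι : Type*} (s : Finset ι) (f : ι → PP) :
    Aop b S (∑ i ∈ s, f i) = ∑ i ∈ s, Aop b S (f i) := by
  classical
  induction s using Finset.induction_on with
  | empty => simpa using Aop_zero b S
  | insert _ _ h ih => rw [Finset.sum_insert h, Finset.sum_insert h, Aop_add, ih]

lemma Aop_sub (b : Bool) (S : ℤ) (x y : PP) : Aop b S (x - y) = Aop b S x - Aop b S y := by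
  have h : x - y = x + (-1 : ℚ) • y := by module
  rw [h, Aop_add, Aop_smul]
  module


lemma pOp_nord_comm (b b' : Bool) (c S i : ℤ) (q : PP) :
    pOp b' c (nord b i (S - i) q)
      = nord b i (S - i) (pOp b' c q)
        + (if b' = b ∧ c + i = 0 ∧ Odd c then ((2 * c : ℤ) : ℚ) else 0) • pOp b (S - i) q
        + (if b' = b ∧ c + (S - i) = 0 ∧ Odd c then ((2 * c : ℤ) : ℚ) else 0) • pOp b i q := by
  by_cases hc : 0 < i ∧ S - i < 0
  · rw [nord_pos_neg hc.1 hc.2, nord_pos_neg hc.1 hc.2]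
    rw [pOp_comm b' b c (S - i) (pOp b i q)]
    rw [pOp_comm b' b c i q]
    rw [pOp_add, pOp_smul]
    try abel
  · rw [nord_other hc, nord_other hc]
    rw [pOp_comm b' b c i (pOp b (S - i) q)]
    rw [pOp_comm b' b c (S - i) q]
    rw [pOp_add, pOp_smul]
    abel

lemma pOp_Aop_comm (b b' : Bool) {S : ℤ} (hS : Even S) (c : ℤ) (q : PP) :
    pOp b' c (Aop b S q) = Aop b S (pOp b' c q)
      + (if b' = b then ((4 * c : ℤ) : ℚ) • pOp b (S + c) q else 0) := by
  classical
  obtain ⟨B₀, hB₀1, hB₀⟩ := exists_bdd q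
  set B : ℤ := B₀ + |c| + |S| with hBdef
  have habsc : -c ≤ |c| ∧ c ≤ |c| ∧ 0 ≤ |c| := ⟨neg_le_abs c, le_abs_self c, abs_nonneg c⟩
  have habsS : -S ≤ |S| ∧ S ≤ |S| ∧ 0 ≤ |S| := ⟨neg_le_abs S, le_abs_self S, abs_nonneg S⟩
  have hB0 : (0:ℤ) ≤ B := by omega
  have hq : Bdd B q := hB₀.mono (by omega)
  have hq' : Bdd B (pOp b' c q) := bdd_pOp hq b' (by omega)
  rw [Aop_eq_sum hq hB0 b S (Finset.Subset.refl _),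
    Aop_eq_sum hq' hB0 b S (Finset.Subset.refl _), pOp_sum]
  set I : Finset ℤ := Finset.Icc (S - B) B with hI
  have key : ∀ i ∈ I, pOp b' c (nord b i (S - i) q)
      = nord b i (S - i) (pOp b' c q)
        + (if b' = b ∧ c + i = 0 ∧ Odd c then ((2 * c : ℤ) : ℚ) else 0) • pOp b (S - i) q
        + (if b' = b ∧ c + (S - i) = 0 ∧ Odd c then ((2 * c : ℤ) : ℚ) else 0) • pOp b i q :=
    fun i _ => pOp_nord_comm b b' c S i q
  rw [Finset.sum_congr rfl key]
  rw [Finset.sum_add_distrib, Finset.sum_add_distrib]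
  have hmem1 : -c ∈ I := by rw [hI, Finset.mem_Icc]; omega
  have hmem2 : S + c ∈ I := by rw [hI, Finset.mem_Icc]; omega
  have hsum1 : ∑ i ∈ I, (if b' = b ∧ c + i = 0 ∧ Odd c then ((2 * c : ℤ) : ℚ) else 0)
        • pOp b (S - i) q
      = (if b' = b ∧ Odd c then ((2 * c : ℤ) : ℚ) else 0) • pOp b (S + c) q := by
    rw [Finset.sum_eq_single_of_mem (-c) hmem1]
    · have hc1 : (S - -c) = S + c := by omega
      rw [hc1]
      by_cases hh : b' = b ∧ Odd c
      · rw [if_pos (⟨hh.1, by omega, hh.2⟩ : b' = b ∧ c + -c = 0 ∧ Odd c), if_pos hh]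
      · rw [if_neg (by tauto), if_neg hh]
    · intro i _ hne
      rw [if_neg (by rintro ⟨-, h2, -⟩; exact hne (by omega)), zero_smul]
  have hsum2 : ∑ i ∈ I, (if b' = b ∧ c + (S - i) = 0 ∧ Odd c then ((2 * c : ℤ) : ℚ) else 0)
        • pOp b i q
      = (if b' = b ∧ Odd c then ((2 * c : ℤ) : ℚ) else 0) • pOp b (S + c) q := by
    rw [Finset.sum_eq_single_of_mem (S + c) hmem2]
    · by_cases hh : b' = b ∧ Odd c
      · rw [if_pos (⟨hh.1, by omega, hh.2⟩ : b' = b ∧ c + (S - (S + c)) = 0 ∧ Odd c), if_pos hh]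
      · rw [if_neg (by tauto), if_neg hh]
    · intro i _ hne
      rw [if_neg (by rintro ⟨-, h2, -⟩; exact hne (by omega)), zero_smul]
  rw [hsum1, hsum2]
  have hfinal : (if b' = b ∧ Odd c then ((2 * c : ℤ) : ℚ) else 0) • pOp b (S + c) q
        + (if b' = b ∧ Odd c then ((2 * c : ℤ) : ℚ) else 0) • pOp b (S + c) q
      = (if b' = b then ((4 * c : ℤ) : ℚ) • pOp b (S + c) q else 0) := by
    by_cases h1 : b' = b
    · by_cases h2 : Odd c
      · rw [if_pos ⟨h1, h2⟩, if_pos h1, ← add_smul]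
        congr 1
        push_cast
        ring
      · have : pOp b (S + c) q = 0 := by
          refine pOp_not_odd ?_ q
          intro hodd
          rcases hS with ⟨m, hm⟩
          exact h2 (by
            obtain ⟨m', hm'⟩ := hodd
            exact ⟨m' - m, by omega⟩)
        rw [this, if_pos h1]
        simp
    · rw [if_neg (by tauto), if_neg h1]
      simp
  rw [add_assoc, hfinal]


lemma Aop_pOp (b : Bool) {S : ℤ} (hS : Even S) (x : ℤ) (Y : PP) :
    Aop b S (pOp b x Y) = pOp b x (Aop b S Y) - ((4 * x : ℤ) : ℚ) • pOp b (S + x) Y := by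
  have h := pOp_Aop_comm b b hS x Y
  rw [if_pos rfl] at h
  rw [h]
  abel

lemma even_odd_add {S x : ℤ} (hS : Even S) : Odd (S + x) ↔ Odd x := by
  rcases hS with ⟨m, hm⟩
  constructor
  · rintro ⟨k, hk⟩; exact ⟨k - m, by omega⟩
  · rintro ⟨k, hk⟩; exact ⟨k + m, by omega⟩


lemma Phi (b : Bool) {S₁ S₂ : ℤ} (h₁ : Even S₁) (h₂ : Even S₂)
    (hpos : S₁ + S₂ = 0 → 0 ≤ S₁) (c : ℤ) (q : PP) :
    Aop b S₁ (nord b c (S₂ - c) q) - nord b c (S₂ - c) (Aop b S₁ q)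
      = ((-4 * (S₂ - c) : ℤ) : ℚ) • nord b c (S₁ + S₂ - c) q
        + ((-4 * c : ℤ) : ℚ) • nord b (S₁ + c) (S₂ - c) q
        + (if Odd c ∧ S₁ + S₂ = 0 ∧ 0 < S₁ + c ∧ c < 0
            then ((-8 * (c * (S₁ + c)) : ℤ) : ℚ) else 0) • q := by
  have hrw1 : S₁ + (S₂ - c) = S₁ + S₂ - c := by ring
  by_cases hbr : 0 < c ∧ S₂ - c < 0
  · -- branch 1 : nord c (S₂-c) = pOp (S₂-c) ∘ pOp c
    rw [nord_pos_neg hbr.1 hbr.2, nord_pos_neg hbr.1 hbr.2,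
      Aop_pOp b h₁ (S₂ - c) (pOp b c q), Aop_pOp b h₁ c q, pOp_sub, pOp_smul, hrw1]
    have hA : pOp b (S₁ + S₂ - c) (pOp b c q) = nord b c (S₁ + S₂ - c) q := by
      by_cases hsc : S₁ + S₂ - c < 0
      · rw [nord_pos_neg hbr.1 hsc]
      · rw [nord_other (by omega), pOp_comm b b (S₁ + S₂ - c) c q,
          if_neg (by rintro ⟨-, hh, -⟩; omega), zero_smul, add_zero]
    have hB : pOp b (S₂ - c) (pOp b (S₁ + c) q) = nord b (S₁ + c) (S₂ - c) q := by
      by_cases hs : 0 < S₁ + c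
      · rw [nord_pos_neg hs hbr.2]
      · rw [nord_other (by omega), pOp_comm b b (S₂ - c) (S₁ + c) q,
          if_neg (by rintro ⟨-, hh, -⟩; omega), zero_smul, add_zero]
    rw [hA, hB, if_neg (by rintro ⟨-, -, -, hc0⟩; omega)]
    push_cast
    module
  · -- branch 2 : nord c (S₂-c) = pOp c ∘ pOp (S₂-c)
    rw [nord_other hbr, nord_other hbr,
      Aop_pOp b h₁ c (pOp b (S₂ - c) q), Aop_pOp b h₁ (S₂ - c) q, pOp_sub, pOp_smul, hrw1]
    have hC : pOp b c (pOp b (S₁ + S₂ - c) q) = nord b c (S₁ + S₂ - c) q := by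
      by_cases hsc : 0 < c ∧ S₁ + S₂ - c < 0
      · -- wrong order; no correction since S₁+S₂ ≠ 0 here
        rw [nord_pos_neg hsc.1 hsc.2, pOp_comm b b c (S₁ + S₂ - c) q,
          if_neg ?_, zero_smul, add_zero]
        rintro ⟨-, hh, -⟩
        have hS0 : S₁ + S₂ = 0 := by omega
        have := hpos hS0
        omega
      · rw [nord_other hsc]
    rw [hC]
    by_cases hD : 0 < S₁ + c ∧ S₂ - c < 0
    · -- wrong order with possible correction
      rw [pOp_comm b b (S₁ + c) (S₂ - c) q]
      have hnord : pOp b (S₂ - c) (pOp b (S₁ + c) q) = nord b (S₁ + c) (S₂ - c) q := by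
        rw [nord_pos_neg hD.1 hD.2]
      rw [hnord]
      have hcond : (b = b ∧ S₁ + c + (S₂ - c) = 0 ∧ Odd (S₁ + c))
          ↔ (Odd c ∧ S₁ + S₂ = 0 ∧ 0 < S₁ + c ∧ c < 0) := by
        constructor
        · rintro ⟨-, hh, hodd⟩
          have hoc : Odd c := (even_odd_add h₁).mp hodd
          refine ⟨hoc, by omega, hD.1, ?_⟩
          rcases hoc with ⟨k, hk⟩
          omega
        · rintro ⟨hoc, hh, -, -⟩
          exact ⟨rfl, by omega, (even_odd_add h₁).mpr hoc⟩
      by_cases hP : Odd c ∧ S₁ + S₂ = 0 ∧ 0 < S₁ + c ∧ c < 0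
      · rw [if_pos (hcond.mpr hP), if_pos hP]
        push_cast
        module
      · rw [if_neg (fun hh => hP (hcond.mp hh)), if_neg hP]
        push_cast
        module
    · rw [if_neg ?_]
      · have hnord : pOp b (S₁ + c) (pOp b (S₂ - c) q) = nord b (S₁ + c) (S₂ - c) q :=
          (nord_other hD b q).symm
        rw [hnord]
        push_cast
        module
      · rintro ⟨hoc, hh, h3, h4⟩
        apply hD
        constructor
        · omega
        · omega


lemma sum_eq_sum_of_vanish {g : ℤ → PP} {K I J : Finset ℤ} (hK : ∀ c ∉ K, g c = 0)
    (hKI : K ⊆ I) (hKJ : K ⊆ J) : ∑ c ∈ I, g c = ∑ c ∈ J, g c := by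
  rw [← Finset.sum_subset hKI (fun x _ hx => hK x hx),
    ← Finset.sum_subset hKJ (fun x _ hx => hK x hx)]

lemma sum_odd_sq (N : ℕ) : ∑ k ∈ Finset.range N, (2*(k:ℚ)+1) = (N:ℚ)^2 := by
  induction N with
  | zero => simp
  | succ n ih =>
    rw [Finset.sum_range_succ, ih]
    push_cast
    ring

lemma central_sum (N : ℕ) :
    ∑ k ∈ Finset.range N, (8*(2*(k:ℚ)+1)*(2*(N:ℚ) - (2*(k:ℚ)+1)))
      = (16*(N:ℚ)^3 + 8*(N:ℚ))/3 := by
  induction N with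
  | zero => simp
  | succ n ih =>
    rw [Finset.sum_range_succ]
    have hsplit : ∀ k ∈ Finset.range n,
        (8*(2*(k:ℚ)+1)*(2*((n+1:ℕ):ℚ) - (2*(k:ℚ)+1)))
          = 8*(2*(k:ℚ)+1)*(2*(n:ℚ) - (2*(k:ℚ)+1)) + 16*(2*(k:ℚ)+1) := by
      intro k _
      push_cast
      ring
    rw [Finset.sum_congr rfl hsplit, Finset.sum_add_distrib, ih, ← Finset.mul_sum,
      sum_odd_sq]
    push_cast
    ring


def shiftEmb (S : ℤ) : ℤ ↪ ℤ := ⟨fun x => S + x, add_right_injective S⟩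

@[simp] lemma shiftEmb_apply (S x : ℤ) : shiftEmb S x = S + x := rfl

def negOddEmb : ℕ ↪ ℤ := ⟨fun k => -(2*(k:ℤ)+1), fun x y h => by simp at h; omega⟩

@[simp] lemma negOddEmb_apply (k : ℕ) : negOddEmb k = -(2*(k:ℤ)+1) := rfl

lemma keyAux_s8 (b : Bool) {S₁ S₂ : ℤ} (h₁ : Even S₁) (h₂ : Even S₂)
    (hpos : S₁ + S₂ = 0 → 0 ≤ S₁) (q : PP) :
    Aop b S₁ (Aop b S₂ q) - Aop b S₂ (Aop b S₁ q)
      = ((4 * (S₁ - S₂) : ℤ) : ℚ) • Aop b (S₁ + S₂) q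
        + (if S₁ + S₂ = 0 then ((2 * S₁^3 + 4 * S₁ : ℤ) : ℚ) / 3 else 0) • q := by
  classical
  obtain ⟨B₀, hB₀1, hB₀⟩ := exists_bdd q
  have habs1 : -S₁ ≤ |S₁| ∧ S₁ ≤ |S₁| ∧ 0 ≤ |S₁| := ⟨neg_le_abs S₁, le_abs_self S₁, abs_nonneg S₁⟩
  have habs2 : -S₂ ≤ |S₂| ∧ S₂ ≤ |S₂| ∧ 0 ≤ |S₂| := ⟨neg_le_abs S₂, le_abs_self S₂, abs_nonneg S₂⟩
  have hB₀0 : (0:ℤ) ≤ B₀ := by omega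
  -- truncations
  have st1 : Aop b S₂ q
      = ∑ c ∈ Finset.Icc (-(2*(B₀ + |S₁| + |S₂|))) (2*(B₀ + |S₁| + |S₂|)), nord b c (S₂ - c) q :=
    Aop_eq_sum hB₀ hB₀0 b S₂ (Finset.Icc_subset_Icc (by omega) (by omega))
  have hbddA : Bdd (B₀ + |S₁|) (Aop b S₁ q) := bdd_Aop hB₀ hB₀0 b S₁
  have st2 : Aop b S₂ (Aop b S₁ q)
      = ∑ c ∈ Finset.Icc (-(2*(B₀ + |S₁| + |S₂|))) (2*(B₀ + |S₁| + |S₂|)),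
          nord b c (S₂ - c) (Aop b S₁ q) :=
    Aop_eq_sum hbddA (by omega) b S₂ (Finset.Icc_subset_Icc (by omega) (by omega))
  rw [st1, st2, Aop_sum, ← Finset.sum_sub_distrib,
    Finset.sum_congr rfl (fun c _ => Phi b h₁ h₂ hpos c q),
    Finset.sum_add_distrib, Finset.sum_add_distrib]
  have hvan : ∀ x ∉ Finset.Icc (S₁ + S₂ - B₀) B₀, nord b x (S₁ + S₂ - x) q = 0 := fun x hx =>
    nord_vanish hB₀ hB₀0 b hx
  have hsumX : ∑ c ∈ Finset.Icc (-(2*(B₀ + |S₁| + |S₂|))) (2*(B₀ + |S₁| + |S₂|)),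
        ((-4 * (S₂ - c) : ℤ) : ℚ) • nord b c (S₁ + S₂ - c) q
      = ∑ c ∈ Finset.Icc (-(3*(B₀ + |S₁| + |S₂|))) (3*(B₀ + |S₁| + |S₂|)),
        ((-4 * (S₂ - c) : ℤ) : ℚ) • nord b c (S₁ + S₂ - c) q :=
    sum_eq_sum_of_vanish (K := Finset.Icc (S₁ + S₂ - B₀) B₀)
      (fun c hc => by rw [hvan c hc, smul_zero])
      (Finset.Icc_subset_Icc (by omega) (by omega))
      (Finset.Icc_subset_Icc (by omega) (by omega))
  have hsumY : ∑ c ∈ Finset.Icc (-(2*(B₀ + |S₁| + |S₂|))) (2*(B₀ + |S₁| + |S₂|)),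
        ((-4 * c : ℤ) : ℚ) • nord b (S₁ + c) (S₂ - c) q
      = ∑ c ∈ Finset.Icc (-(3*(B₀ + |S₁| + |S₂|))) (3*(B₀ + |S₁| + |S₂|)),
        ((-4 * (c - S₁) : ℤ) : ℚ) • nord b c (S₁ + S₂ - c) q := by
    have hcongr : ∀ c ∈ Finset.Icc (-(2*(B₀ + |S₁| + |S₂|))) (2*(B₀ + |S₁| + |S₂|)),
        ((-4 * c : ℤ) : ℚ) • nord b (S₁ + c) (S₂ - c) q
          = ((-4 * (shiftEmb S₁ c - S₁) : ℤ) : ℚ)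
              • nord b (shiftEmb S₁ c) (S₁ + S₂ - shiftEmb S₁ c) q := by
      intro c _
      rw [shiftEmb_apply]
      have h1 : S₁ + c - S₁ = c := by ring
      have h2 : S₁ + S₂ - (S₁ + c) = S₂ - c := by ring
      rw [h1, h2]
    rw [Finset.sum_congr rfl hcongr, ← Finset.sum_map _ (shiftEmb S₁)
      (fun x => ((-4 * (x - S₁) : ℤ) : ℚ) • nord b x (S₁ + S₂ - x) q)]
    refine sum_eq_sum_of_vanish (K := Finset.Icc (S₁ + S₂ - B₀) B₀)
      (fun c hc => by rw [hvan c hc, smul_zero]) ?_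
      (Finset.Icc_subset_Icc (by omega) (by omega))
    intro x hx
    rw [Finset.mem_Icc] at hx
    rw [Finset.mem_map]
    exact ⟨x - S₁, by rw [Finset.mem_Icc]; omega, by rw [shiftEmb_apply]; ring⟩
  rw [hsumX, hsumY, ← Finset.sum_add_distrib]
  have hcomb : ∀ c ∈ Finset.Icc (-(3*(B₀ + |S₁| + |S₂|))) (3*(B₀ + |S₁| + |S₂|)),
      ((-4 * (S₂ - c) : ℤ) : ℚ) • nord b c (S₁ + S₂ - c) q
        + ((-4 * (c - S₁) : ℤ) : ℚ) • nord b c (S₁ + S₂ - c) q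
      = ((4 * (S₁ - S₂) : ℤ) : ℚ) • nord b c (S₁ + S₂ - c) q := by
    intro c _
    rw [← add_smul]
    congr 1
    push_cast
    ring
  rw [Finset.sum_congr rfl hcomb, ← Finset.smul_sum,
    ← Aop_eq_sum hB₀ hB₀0 b (S₁ + S₂) (Finset.Icc_subset_Icc (by omega) (by omega))]
  congr 1
  -- central term
  rw [← Finset.sum_smul]
  congr 1
  by_cases hS0 : S₁ + S₂ = 0
  · rw [if_pos hS0]
    have hS₁0 : 0 ≤ S₁ := hpos hS0
    obtain ⟨M, hM⟩ := h₁
    have hMN : ((M.toNat : ℤ)) = M := Int.toNat_of_nonneg (by omega)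
    have h2N : (S₁ : ℚ) = 2*((M.toNat : ℕ):ℚ) := by
      exact_mod_cast congrArg (Int.cast : ℤ → ℚ) (by omega : S₁ = 2*((M.toNat:ℕ):ℤ))
    have hL2 : ∀ c ∈ Finset.Icc (-(2*(B₀ + |S₁| + |S₂|))) (2*(B₀ + |S₁| + |S₂|)),
        c ∉ (Finset.range M.toNat).map negOddEmb →
        (if Odd c ∧ S₁ + S₂ = 0 ∧ 0 < S₁ + c ∧ c < 0
          then ((-8 * (c * (S₁ + c)) : ℤ) : ℚ) else 0) = 0 := by
      intro c _ hc
      rw [if_neg]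
      rintro ⟨⟨k, hk⟩, -, hlt, hneg⟩
      apply hc
      rw [Finset.mem_map]
      refine ⟨(-k-1).toNat, by rw [Finset.mem_range]; omega, by rw [negOddEmb_apply]; omega⟩
    have hsub : (Finset.range M.toNat).map negOddEmb
        ⊆ Finset.Icc (-(2*(B₀ + |S₁| + |S₂|))) (2*(B₀ + |S₁| + |S₂|)) := by
      intro x hx
      rw [Finset.mem_map] at hx
      obtain ⟨k, hk, rfl⟩ := hx
      rw [Finset.mem_range] at hk
      rw [negOddEmb_apply, Finset.mem_Icc]
      omega
    rw [← Finset.sum_subset hsub (fun x hx hnx => hL2 x hx hnx), Finset.sum_map]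
    have hval : ∀ k ∈ Finset.range M.toNat,
        (if Odd (negOddEmb k) ∧ S₁ + S₂ = 0 ∧ 0 < S₁ + (negOddEmb k) ∧ (negOddEmb k) < 0
          then ((-8 * ((negOddEmb k) * (S₁ + (negOddEmb k))) : ℤ) : ℚ) else 0)
          = 8*(2*(k:ℚ)+1)*(2*((M.toNat : ℕ):ℚ) - (2*(k:ℚ)+1)) := by
      intro k hk
      rw [Finset.mem_range] at hk
      rw [negOddEmb_apply,
        if_pos ⟨⟨-(k:ℤ)-1, by ring⟩, hS0, by omega, by omega⟩]
      push_cast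
      rw [h2N]
      push_cast
      ring
    rw [Finset.sum_congr rfl hval, central_sum M.toNat]
    push_cast
    rw [h2N]
    push_cast
    ring
  · rw [if_neg hS0]
    refine Finset.sum_eq_zero ?_
    intro c _
    rw [if_neg (by rintro ⟨-, h2, -⟩; exact hS0 h2)]


lemma Aop_nord_cross {b b' : Bool} (hbb : b' ≠ b) {S : ℤ} (hS : Even S) (a c : ℤ) (q : PP) :
    Aop b S (nord b' a c q) = nord b' a c (Aop b S q) := by
  have hcomm : ∀ (x : ℤ) (Y : PP), pOp b' x (Aop b S Y) = Aop b S (pOp b' x Y) := by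
    intro x Y
    rw [pOp_Aop_comm b b' hS x Y, if_neg hbb, add_zero]
  by_cases hc : 0 < a ∧ c < 0
  · rw [nord_pos_neg hc.1 hc.2, nord_pos_neg hc.1 hc.2, hcomm, hcomm]
  · rw [nord_other hc, nord_other hc, hcomm, hcomm]

lemma Aop_comm_cross {b b' : Bool} (hbb : b ≠ b') {S S' : ℤ} (hS : Even S) (q : PP) :
    Aop b S (Aop b' S' q) = Aop b' S' (Aop b S q) := by
  obtain ⟨B₀, hB₀1, hB₀⟩ := exists_bdd q
  have habs : -S ≤ |S| ∧ S ≤ |S| ∧ 0 ≤ |S| := ⟨neg_le_abs S, le_abs_self S, abs_nonneg S⟩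
  have hB₀0 : (0:ℤ) ≤ B₀ := by omega
  have st1 : Aop b' S' q = ∑ c ∈ Finset.Icc (S' - (B₀ + |S|)) (B₀ + |S|), nord b' c (S' - c) q :=
    Aop_eq_sum hB₀ hB₀0 b' S' (Finset.Icc_subset_Icc (by omega) (by omega))
  have st2 : Aop b' S' (Aop b S q)
      = ∑ c ∈ Finset.Icc (S' - (B₀ + |S|)) (B₀ + |S|), nord b' c (S' - c) (Aop b S q) :=
    Aop_eq_sum (bdd_Aop hB₀ hB₀0 b S) (by omega) b' S' (Finset.Subset.refl _)
  rw [st1, st2, Aop_sum]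
  exact Finset.sum_congr rfl fun c _ => Aop_nord_cross (Ne.symm hbb) hS c (S' - c) q

lemma Aop_comm_same (b : Bool) {S₁ S₂ : ℤ} (h₁ : Even S₁) (h₂ : Even S₂) (q : PP) :
    Aop b S₁ (Aop b S₂ q) - Aop b S₂ (Aop b S₁ q)
      = ((4 * (S₁ - S₂) : ℤ) : ℚ) • Aop b (S₁ + S₂) q
        + (if S₁ + S₂ = 0 then ((2 * S₁^3 + 4 * S₁ : ℤ) : ℚ) / 3 else 0) • q := by
  by_cases hc : S₁ + S₂ = 0 → 0 ≤ S₁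
  · exact keyAux_s8 b h₁ h₂ hc q
  · push_neg at hc
    obtain ⟨hS0, hS₁neg⟩ := hc
    have h := keyAux_s8 b h₂ h₁ (fun _ => by omega) q
    have h' : Aop b S₁ (Aop b S₂ q) - Aop b S₂ (Aop b S₁ q)
        = -(((4 * (S₂ - S₁) : ℤ) : ℚ) • Aop b (S₂ + S₁) q
            + (if S₂ + S₁ = 0 then ((2 * S₂^3 + 4 * S₂ : ℤ) : ℚ) / 3 else 0) • q) := by
      rw [← h]; abel
    rw [h']
    have e0 : S₂ + S₁ = S₁ + S₂ := by ring
    rw [e0, if_pos hS0, if_pos hS0]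
    have e1 : ((4 * (S₂ - S₁) : ℤ) : ℚ) = -((4 * (S₁ - S₂) : ℤ) : ℚ) := by push_cast; ring
    have e2 : ((2 * S₂^3 + 4 * S₂ : ℤ) : ℚ) / 3 = -(((2 * S₁^3 + 4 * S₁ : ℤ) : ℚ) / 3) := by
      have hS₂ : S₂ = -S₁ := by omega
      rw [hS₂]; push_cast; ring
    rw [e1, e2]
    module


lemma Aop_def (b : Bool) (S : ℤ) (q : PP) :
    (∑ᶠ i : ℤ, nord b i (S - i) q) = Aop b S q := rfl

def Wop (n : ℕ) (j : ℤ) (q : PP) : PP :=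
  (8*(n:ℚ)-8)⁻¹ • Aop false ((2*(n:ℤ)-2)*j) q + (8:ℚ)⁻¹ • Aop true (2*j) q
    + (-(2:ℚ)⁻¹) • pOp false ((2*(n:ℤ)-2)*(j+1)+1) q

lemma Wop_add (n : ℕ) (j : ℤ) (x y : PP) : Wop n j (x + y) = Wop n j x + Wop n j y := by
  simp only [Wop, Aop_add, pOp_add]
  module

lemma Wop_smul (n : ℕ) (j : ℤ) (c : ℚ) (x : PP) : Wop n j (c • x) = c • Wop n j x := by
  simp only [Wop, Aop_smul, pOp_smul]
  module

lemma pderiv_toNat_eq (bb : Bool) (M : ℤ) (hM : 0 ≤ M) (q : PP) :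
    (pderiv ((bb, M.toNat) : Bool × ℕ) q : PP) = (2:ℚ)⁻¹ • pOp bb (2*M+1) q := by
  have hpos : (0:ℤ) < 2*M+1 := by omega
  have hodd : Odd (2*M+1) := ⟨M, by ring⟩
  simp only [pOp, if_pos (And.intro hpos hodd)]
  have hidx : ((2*M+1).toNat - 1) / 2 = M.toNat := by omega
  rw [hidx, smul_smul]
  norm_num
/-- The Virasoro operator
`V_j = (1/(8n-8))·Σ_{i∈ℤ} :p_i p_{(2n-2)j-i}: + (1/8)·Σ_{i∈ℤ} :p̂_i p̂_{2j-i}: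
+ δ_{j,0}·(n/24)·(1 + 1/(2n-2))·Id`, acting pointwise (on each polynomial only finitely
many summands act nontrivially). -/
def Vop (n : ℕ) (j : ℤ) : PP → PP := fun q =>
  (8 * (n : ℚ) - 8)⁻¹ • (∑ᶠ i : ℤ, nord false i ((2 * (n : ℤ) - 2) * j - i) q)
  + (8 : ℚ)⁻¹ • (∑ᶠ i : ℤ, nord true i (2 * j - i) q)
  + (if j = 0 then (n : ℚ) / 24 * (1 + (2 * (n : ℚ) - 2)⁻¹) else 0) • q

/-- The operator `L̃_j = V_j - ∂/∂t_{(2n-2)(j+1)+1}` (for `j ≥ -1`); the variable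
`t_{(2n-2)(j+1)+1} = t_{2(n-1)(j+1)+1}` has index `(false, (n-1)(j+1))`. -/
def Ltil (n : ℕ) (j : ℤ) : PP → PP := fun q =>
  Vop n j q - pderiv (false, (((n : ℤ) - 1) * (j + 1)).toNat) q

lemma Ltil_decomp (n : ℕ) (hn : 3 ≤ n) (j : ℤ) (hj : -1 ≤ j) (q : PP) :
    Ltil n j q = Wop n j q + (if j = 0 then (n:ℚ)/24*(1+(2*(n:ℚ)-2)⁻¹) else 0) • q := by
  have hn' : (3:ℤ) ≤ (n:ℤ) := by exact_mod_cast hn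
  unfold Ltil Vop Wop
  rw [Aop_def false ((2*(n:ℤ)-2)*j) q, Aop_def true (2*j) q]
  have hM0 : (0:ℤ) ≤ ((n:ℤ)-1)*(j+1) := mul_nonneg (by omega) (by omega)
  rw [pderiv_toNat_eq false _ hM0]
  have hidx : 2*(((n:ℤ)-1)*(j+1))+1 = (2*(n:ℤ)-2)*(j+1)+1 := by ring
  rw [hidx]
  module


lemma Wcomm (n : ℕ) (hn : 3 ≤ n) (i j : ℤ) (hi : -1 ≤ i) (hj : -1 ≤ j) (q : PP) :
    Wop n i (Wop n j q) - Wop n j (Wop n i q)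
      = ((i - j : ℤ) : ℚ) • Wop n (i + j) q
        + (if i + j = 0 then 2*(i:ℚ)*((n:ℚ)/24*(1+(2*(n:ℚ)-2)⁻¹)) + (n:ℚ)/12*((i:ℚ)^3-(i:ℚ)) else 0) • q := by
  have hn' : (3:ℤ) ≤ (n:ℤ) := by exact_mod_cast hn
  have hnq : (3:ℚ) ≤ (n:ℚ) := by exact_mod_cast hn
  have hevRi : Even ((2*(n:ℤ)-2)*i) := ⟨((n:ℤ)-1)*i, by ring⟩
  have hevRj : Even ((2*(n:ℤ)-2)*j) := ⟨((n:ℤ)-1)*j, by ring⟩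
  have hev2i : Even ((2:ℤ)*i) := ⟨i, by ring⟩
  have hev2j : Even ((2:ℤ)*j) := ⟨j, by ring⟩
  have hKipos : (0:ℤ) < (2*(n:ℤ)-2)*(i+1)+1 := by
    have : (0:ℤ) ≤ (2*(n:ℤ)-2)*(i+1) := mul_nonneg (by omega) (by omega)
    omega
  have hKjpos : (0:ℤ) < (2*(n:ℤ)-2)*(j+1)+1 := by
    have : (0:ℤ) ≤ (2*(n:ℤ)-2)*(j+1) := mul_nonneg (by omega) (by omega)
    omega
  have pair : Wop n i (Wop n j q) - Wop n j (Wop n i q)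
      = ((8*(n:ℚ)-8)⁻¹*(8*(n:ℚ)-8)⁻¹) • (Aop false ((2*(n:ℤ)-2)*i) (Aop false ((2*(n:ℤ)-2)*j) (q)) - Aop false ((2*(n:ℤ)-2)*j) (Aop false ((2*(n:ℤ)-2)*i) (q)))
      + ((8*(n:ℚ)-8)⁻¹*(8:ℚ)⁻¹) • (Aop false ((2*(n:ℤ)-2)*i) (Aop true (2*j) (q)) - Aop true (2*j) (Aop false ((2*(n:ℤ)-2)*i) (q)))
      + ((8:ℚ)⁻¹*(8*(n:ℚ)-8)⁻¹) • (Aop true (2*i) (Aop false ((2*(n:ℤ)-2)*j) (q)) - Aop false ((2*(n:ℤ)-2)*j) (Aop true (2*i) (q)))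
      + ((8:ℚ)⁻¹*(8:ℚ)⁻¹) • (Aop true (2*i) (Aop true (2*j) (q)) - Aop true (2*j) (Aop true (2*i) (q)))
      + ((8*(n:ℚ)-8)⁻¹*(-(2:ℚ)⁻¹)) • (Aop false ((2*(n:ℤ)-2)*i) (pOp false ((2*(n:ℤ)-2)*(j+1)+1) (q)) - pOp false ((2*(n:ℤ)-2)*(j+1)+1) (Aop false ((2*(n:ℤ)-2)*i) (q)))
      + ((-(2:ℚ)⁻¹)*(8*(n:ℚ)-8)⁻¹) • (pOp false ((2*(n:ℤ)-2)*(i+1)+1) (Aop false ((2*(n:ℤ)-2)*j) (q)) - Aop false ((2*(n:ℤ)-2)*j) (pOp false ((2*(n:ℤ)-2)*(i+1)+1) (q)))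
      + ((8:ℚ)⁻¹*(-(2:ℚ)⁻¹)) • (Aop true (2*i) (pOp false ((2*(n:ℤ)-2)*(j+1)+1) (q)) - pOp false ((2*(n:ℤ)-2)*(j+1)+1) (Aop true (2*i) (q)))
      + ((-(2:ℚ)⁻¹)*(8:ℚ)⁻¹) • (pOp false ((2*(n:ℤ)-2)*(i+1)+1) (Aop true (2*j) (q)) - Aop true (2*j) (pOp false ((2*(n:ℤ)-2)*(i+1)+1) (q)))
      + ((-(2:ℚ)⁻¹)*(-(2:ℚ)⁻¹)) • (pOp false ((2*(n:ℤ)-2)*(i+1)+1) (pOp false ((2*(n:ℤ)-2)*(j+1)+1) (q)) - pOp false ((2*(n:ℤ)-2)*(j+1)+1) (pOp false ((2*(n:ℤ)-2)*(i+1)+1) (q))) := by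
    simp only [Wop, Aop_add, Aop_smul, pOp_add, pOp_smul]
    module
  -- the individual commutators
  have hAA : Aop false ((2*(n:ℤ)-2)*i) (Aop false ((2*(n:ℤ)-2)*j) (q)) - Aop false ((2*(n:ℤ)-2)*j) (Aop false ((2*(n:ℤ)-2)*i) (q))
      = ((4 * ((2*(n:ℤ)-2)*i - (2*(n:ℤ)-2)*j) : ℤ) : ℚ) • Aop false ((2*(n:ℤ)-2)*(i+j)) q
        + (if (2*(n:ℤ)-2)*i + (2*(n:ℤ)-2)*j = 0 then ((2 * ((2*(n:ℤ)-2)*i)^3 + 4 * ((2*(n:ℤ)-2)*i) : ℤ) : ℚ) / 3 else 0) • q := by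
    have h := Aop_comm_same false hevRi hevRj q
    rw [show (2*(n:ℤ)-2)*i + (2*(n:ℤ)-2)*j = (2*(n:ℤ)-2)*(i+j) by ring] at h
    rw [h, show (2*(n:ℤ)-2)*(i+j) = (2*(n:ℤ)-2)*i + (2*(n:ℤ)-2)*j by ring]
  have hBB : Aop true (2*i) (Aop true (2*j) (q)) - Aop true (2*j) (Aop true (2*i) (q))
      = ((4 * (2*i - 2*j) : ℤ) : ℚ) • Aop true (2*(i+j)) q
        + (if 2*i + 2*j = 0 then ((2 * (2*i)^3 + 4 * (2*i) : ℤ) : ℚ) / 3 else 0) • q := by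
    have h := Aop_comm_same true hev2i hev2j q
    rw [show (2:ℤ)*i + 2*j = 2*(i+j) by ring] at h
    rw [h, show (2:ℤ)*(i+j) = 2*i + 2*j by ring]
  have hAB : Aop false ((2*(n:ℤ)-2)*i) (Aop true (2*j) (q)) - Aop true (2*j) (Aop false ((2*(n:ℤ)-2)*i) (q)) = 0 := by
    rw [Aop_comm_cross (by simp) hevRi q, sub_self]
  have hBA : Aop true (2*i) (Aop false ((2*(n:ℤ)-2)*j) (q)) - Aop false ((2*(n:ℤ)-2)*j) (Aop true (2*i) (q)) = 0 := by
    rw [Aop_comm_cross (by simp) hev2i q, sub_self]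
  have hAP : Aop false ((2*(n:ℤ)-2)*i) (pOp false ((2*(n:ℤ)-2)*(j+1)+1) (q)) - pOp false ((2*(n:ℤ)-2)*(j+1)+1) (Aop false ((2*(n:ℤ)-2)*i) (q)) = (-(4 * ((2*(n:ℤ)-2)*(j+1)+1) : ℤ) : ℚ) • pOp false ((2*(n:ℤ)-2)*(i+j+1)+1) q := by
    have h := pOp_Aop_comm false false hevRi ((2*(n:ℤ)-2)*(j+1)+1) q
    rw [if_pos rfl] at h
    rw [h, show (2*(n:ℤ)-2)*i + ((2*(n:ℤ)-2)*(j+1)+1) = (2*(n:ℤ)-2)*(i+j+1)+1 by ring]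
    push_cast
    module
  have hPA : pOp false ((2*(n:ℤ)-2)*(i+1)+1) (Aop false ((2*(n:ℤ)-2)*j) (q)) - Aop false ((2*(n:ℤ)-2)*j) (pOp false ((2*(n:ℤ)-2)*(i+1)+1) (q)) = ((4 * ((2*(n:ℤ)-2)*(i+1)+1) : ℤ) : ℚ) • pOp false ((2*(n:ℤ)-2)*(i+j+1)+1) q := by
    have h := pOp_Aop_comm false false hevRj ((2*(n:ℤ)-2)*(i+1)+1) q
    rw [if_pos rfl] at h
    rw [h, show (2*(n:ℤ)-2)*j + ((2*(n:ℤ)-2)*(i+1)+1) = (2*(n:ℤ)-2)*(i+j+1)+1 by ring]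
    push_cast
    module
  have hTP : Aop true (2*i) (pOp false ((2*(n:ℤ)-2)*(j+1)+1) (q)) - pOp false ((2*(n:ℤ)-2)*(j+1)+1) (Aop true (2*i) (q)) = 0 := by
    have h := pOp_Aop_comm true false hev2i ((2*(n:ℤ)-2)*(j+1)+1) q
    rw [if_neg (by simp), add_zero] at h
    rw [h, sub_self]
  have hPT : pOp false ((2*(n:ℤ)-2)*(i+1)+1) (Aop true (2*j) (q)) - Aop true (2*j) (pOp false ((2*(n:ℤ)-2)*(i+1)+1) (q)) = 0 := by
    have h := pOp_Aop_comm true false hev2j ((2*(n:ℤ)-2)*(i+1)+1) q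
    rw [if_neg (by simp), add_zero] at h
    rw [← h, sub_self]
  have hPP : pOp false ((2*(n:ℤ)-2)*(i+1)+1) (pOp false ((2*(n:ℤ)-2)*(j+1)+1) (q)) - pOp false ((2*(n:ℤ)-2)*(j+1)+1) (pOp false ((2*(n:ℤ)-2)*(i+1)+1) (q)) = 0 := by
    rw [pOp_comm false false ((2*(n:ℤ)-2)*(i+1)+1) ((2*(n:ℤ)-2)*(j+1)+1) q,
      if_neg (by rintro ⟨-, hh, -⟩; omega), zero_smul, add_zero, sub_self]
  rw [pair, hAA, hBB, hAB, hBA, hAP, hPA, hTP, hPT, hPP]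
  simp only [Wop]
  have h8 : (8*(n:ℚ)-8) ≠ 0 := by intro hh; nlinarith
  have h2 : (2*(n:ℚ)-2) ≠ 0 := by intro hh; nlinarith
  by_cases hij0 : i + j = 0
  · rw [if_pos (show (2*(n:ℤ)-2)*i + (2*(n:ℤ)-2)*j = 0 by rw [show (2*(n:ℤ)-2)*i + (2*(n:ℤ)-2)*j = (2*(n:ℤ)-2)*(i+j) by ring, hij0, mul_zero]),
      if_pos (show (2:ℤ)*i + 2*j = 0 by omega), if_pos hij0]
    match_scalars
    all_goals push_cast
    all_goals field_simp [show (n:ℚ) - 1 ≠ 0 by intro hh; nlinarith, show (-1:ℚ) + n ≠ 0 by intro hh; nlinarith]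
    all_goals try ring
  · rw [if_neg (show ¬ ((2*(n:ℤ)-2)*i + (2*(n:ℤ)-2)*j = 0) by
        rw [show (2*(n:ℤ)-2)*i + (2*(n:ℤ)-2)*j = (2*(n:ℤ)-2)*(i+j) by ring]
        intro hh
        rcases mul_eq_zero.mp hh with h' | h' <;> omega),
      if_neg (show ¬ ((2:ℤ)*i + 2*j = 0) by omega), if_neg hij0]
    match_scalars
    all_goals push_cast
    all_goals field_simp [show (n:ℚ) - 1 ≠ 0 by intro hh; nlinarith, show (-1:ℚ) + n ≠ 0 by intro hh; nlinarith]
    all_goals try ring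


/-- for `i, j ≥ -1` with `i + j ≥ -1`, the operators
`L̃_j = V_j - ∂/∂t_{(2n-2)(j+1)+1}` satisfy the Virasoro commutation relation
`[L̃_i, L̃_j] = (i-j)·L̃_{i+j} + δ_{i+j,0}·(n/12)·(i³-i)·Id`. -/
theorem Virasoro_commutation_Ltil (n : ℕ) (hn : 3 ≤ n) (i j : ℤ)
    (hi : -1 ≤ i) (hj : -1 ≤ j) (hij : -1 ≤ i + j) (q : PP) :
    Ltil n i (Ltil n j q) - Ltil n j (Ltil n i q)
      = (i - j) • Ltil n (i + j) q
        + (if i + j = 0 then (n : ℚ) / 12 * ((i : ℚ) ^ 3 - (i : ℚ)) else 0) • q := by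
  have di : ∀ x, Ltil n i x = Wop n i x + (if i = 0 then (n:ℚ)/24*(1+(2*(n:ℚ)-2)⁻¹) else 0) • x :=
    fun x => Ltil_decomp n hn i hi x
  have dj : ∀ x, Ltil n j x = Wop n j x + (if j = 0 then (n:ℚ)/24*(1+(2*(n:ℚ)-2)⁻¹) else 0) • x :=
    fun x => Ltil_decomp n hn j hj x
  have dij : ∀ x, Ltil n (i+j) x = Wop n (i+j) x + (if i+j = 0 then (n:ℚ)/24*(1+(2*(n:ℚ)-2)⁻¹) else 0) • x :=
    fun x => Ltil_decomp n hn (i+j) hij x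
  rw [← Int.cast_smul_eq_zsmul ℚ]
  simp only [di, dj, dij]
  simp only [Wop_add, Wop_smul]
  have key := Wcomm n hn i j hi hj q
  rw [sub_eq_iff_eq_add] at key
  rw [key]
  by_cases hij0 : i + j = 0
  · have hji : j = -i := by omega
    subst hji
    rw [if_pos hij0, if_pos hij0, if_pos hij0]
    have hcast : ((i - -i : ℤ) : ℚ) = 2*(i:ℚ) := by push_cast; ring
    rw [hcast]
    match_scalars
    all_goals push_cast
    all_goals try ring
  · rw [if_neg hij0, if_neg hij0, if_neg hij0]
    match_scalars
    all_goals push_cast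
    all_goals try ring


end
end

section
/- The operator L_0 := Σ_{α=1}^{n} Σ_{p≥0} (p + 1/2 + μ_α)·T^{α,p}∘∂_{α,p} + (1/4)·Σ_{α=1}^{n}(1/4 − μ_α²)·Id equals V_0 as a linear operator on P. (This is the case j = 0 of the coincidence of the Virasoro operators of the Frobenius manifold of the Coxeter group D_n, expressed in the rescaled time variables, with the operators V_j obtained from vertex operators of the two-component BKP hierarchy.) -/
open MvPolynomial

noncomputable section

/-- For `α ∈ {1,…,n}`, the spectrum `μ_α = (2α-n)/(2n-2)` for `α ≤ n-1` and `μ_n = 0`. -/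
def mu (n α : ℕ) : ℚ :=
  if α = n then 0 else (2 * (α : ℚ) - n) / (2 * (n : ℚ) - 2)

/-- The rescaling constants: `c_{α,p} = (2n-2)·∏_{r=0}^{p}((2α-1)/(2n-2)+r)` for
`α ≤ n-1` and `c_{n,p} = 2·∏_{r=0}^{p}(1/2+r)`. -/
def cc (n α p : ℕ) : ℚ :=
  if α = n then 2 * ∏ r ∈ Finset.range (p + 1), ((1 : ℚ) / 2 + r)
  else (2 * (n : ℚ) - 2) * ∏ r ∈ Finset.range (p + 1), ((2 * (α : ℚ) - 1) / (2 * (n : ℚ) - 2) + r)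

/-- The variable corresponding to the time `T^{α,p}`: the variable `t_{(2n-2)p+2α-1}`
(index `(false, (n-1)p+α-1)`) if `α ≤ n-1`, and `t̂_{2p+1}` (index `(true, p)`) if `α = n`. -/
def vIdx (n α p : ℕ) : Bool × ℕ :=
  if α = n then (true, p) else (false, (n - 1) * p + α - 1)

/-- The operator `T^{α,p}`: multiplication by the rescaled time variable `c_{α,p}·t`. -/
def Tmul (n α p : ℕ) : PP → PP := fun q => cc n α p • (X (vIdx n α p) * q)

/-- The operator `∂_{α,p} = c_{α,p}⁻¹·∂/∂t`, the derivative in the rescaled time variable. -/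
def Dop (n α p : ℕ) : PP → PP := fun q => (cc n α p)⁻¹ • pderiv (vIdx n α p) q

/-- The flat metric: `η_{αβ} = 1/(4n-4)` if `α+β = n`, `η_{nn} = 1/4`, and `0` otherwise. -/
def eta (n α β : ℕ) : ℚ :=
  if α + β = n then (4 * (n : ℚ) - 4)⁻¹ else if α = n ∧ β = n then (4 : ℚ)⁻¹ else 0

/-- The inverse metric: `η^{αβ} = 4n-4` if `α+β = n`, `η^{nn} = 4`, and `0` otherwise. -/
def etaInv (n α β : ℕ) : ℚ :=
  if α + β = n then 4 * (n : ℚ) - 4 else if α = n ∧ β = n then 4 else 0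

def gT (b : Bool) (q : PP) (m : ℕ) : PP := X (b, m) * pderiv (b, m) q

lemma pOp_zero_poly (b : Bool) (k : ℤ) : pOp b k 0 = 0 := by
  unfold pOp; split_ifs <;> simp

lemma pOp_even (b : Bool) (k : ℤ) (hk : ¬ Odd k) (q : PP) : pOp b k q = 0 := by
  unfold pOp
  rw [if_neg (fun h => hk h.2), if_neg (fun h => hk h.2)]

lemma pOp_pos (b : Bool) (m : ℕ) (q : PP) :
    pOp b ((2*m+1 : ℕ) : ℤ) q = (2:ℚ) • pderiv (b, m) q := by
  unfold pOp
  rw [if_pos ⟨by exact_mod_cast Nat.succ_pos _, ⟨(m:ℤ), by push_cast; ring⟩⟩]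
  have hidx : (((2*m+1:ℕ):ℤ).toNat - 1)/2 = m := by omega
  rw [hidx]

lemma pOp_neg (b : Bool) (m : ℕ) (q : PP) :
    pOp b (-((2*m+1 : ℕ) : ℤ)) q = ((2*(m:ℚ)+1)) • (X ((b, m) : Bool × ℕ) * q) := by
  unfold pOp
  rw [if_neg (by rintro ⟨h, -⟩; omega),
      if_pos ⟨by omega, ⟨-((m:ℤ)+1), by push_cast; ring⟩⟩]
  have hidx : ((-(-((2*m+1:ℕ):ℤ))).toNat - 1)/2 = m := by omega
  rw [hidx]
  norm_num


lemma nord_diag_pos (b : Bool) (m : ℕ) (q : PP) :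
    nord b ((2*m+1 : ℕ) : ℤ) (-((2*m+1 : ℕ) : ℤ)) q = (2*(2*(m:ℚ)+1)) • gT b q m := by
  unfold nord
  rw [if_pos ⟨by exact_mod_cast Nat.succ_pos _, by omega⟩]
  rw [pOp_pos, pOp_neg, gT]
  rw [mul_smul_comm, smul_smul]
  ring_nf

lemma nord_diag_neg (b : Bool) (m : ℕ) (q : PP) :
    nord b (-((2*m+1 : ℕ) : ℤ)) ((2*m+1 : ℕ) : ℤ) q = (2*(2*(m:ℚ)+1)) • gT b q m := by
  unfold nord
  rw [if_neg (by rintro ⟨h, -⟩; omega)]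
  rw [pOp_pos, pOp_neg, gT]
  rw [mul_smul_comm, smul_smul]
  ring_nf

lemma nord_diag_even (b : Bool) (i : ℤ) (hi : ¬ Odd i) (q : PP) :
    nord b i (-i) q = 0 := by
  have h2 : ¬ Odd (-i) := by simpa [odd_neg] using hi
  unfold nord
  split_ifs <;> simp only []
  · rw [pOp_even b i hi, pOp_zero_poly]
  · rw [pOp_even b (-i) h2, pOp_zero_poly]


lemma sum_nord (b : Bool) (q : PP) (N : Finset ℕ)
    (hN : ∀ m, m ∉ N → pderiv ((b, m) : Bool × ℕ) q = 0) :
    ∑ᶠ i : ℤ, nord b i (-i) q = ∑ m ∈ N, (4*(2*(m:ℚ)+1)) • gT b q m := by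
  classical
  have hgz : ∀ m, m ∉ N → gT b q m = 0 := fun m hm => by
    rw [gT, hN m hm, mul_zero]
  have hsupp : (Function.support fun i : ℤ => nord b i (-i) q)
      ⊆ ↑(N.image (fun m => ((2*m+1 : ℕ) : ℤ)) ∪ N.image (fun m => -((2*m+1 : ℕ) : ℤ))) := by
    intro i hi
    simp only [Function.mem_support] at hi
    by_cases ho : Odd i
    swap
    · exact absurd (nord_diag_even b i ho q) hi
    obtain ⟨k, hk⟩ := ho
    simp only [Finset.coe_union, Set.mem_union, Finset.coe_image, Set.mem_image,
      Finset.mem_coe]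
    rcases le_or_gt 0 k with h0 | h0
    · have him : i = ((2*k.toNat+1 : ℕ) : ℤ) := by push_cast; omega
      rw [him, nord_diag_pos] at hi
      have hg : gT b q k.toNat ≠ 0 := fun h => hi (by rw [h, smul_zero])
      have hmN : k.toNat ∈ N := by by_contra hc; exact hg (hgz _ hc)
      exact Or.inl ⟨k.toNat, hmN, him.symm⟩
    · have him : i = -((2*(-k-1).toNat+1 : ℕ) : ℤ) := by push_cast; omega
      rw [him, neg_neg, nord_diag_neg] at hi
      have hg : gT b q (-k-1).toNat ≠ 0 := fun h => hi (by rw [h, smul_zero])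
      have hmN : (-k-1).toNat ∈ N := by by_contra hc; exact hg (hgz _ hc)
      exact Or.inr ⟨(-k-1).toNat, hmN, him.symm⟩
  rw [finsum_eq_finset_sum_of_support_subset _ hsupp]
  have hdisj : Disjoint (N.image (fun m => ((2*m+1 : ℕ) : ℤ)))
      (N.image (fun m => -((2*m+1 : ℕ) : ℤ))) := by
    rw [Finset.disjoint_left]
    rintro a ha hb
    simp only [Finset.mem_image] at ha hb
    obtain ⟨x, -, hx⟩ := ha
    obtain ⟨y, -, hy⟩ := hb
    omega
  rw [Finset.sum_union hdisj,
    Finset.sum_image (by intros x hx y hy h; dsimp only at h; omega),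
    Finset.sum_image (by intros x hx y hy h; dsimp only at h; omega),
    ← Finset.sum_add_distrib]
  refine Finset.sum_congr rfl fun m hm => ?_
  rw [neg_neg, nord_diag_pos, nord_diag_neg, ← add_smul]
  congr 1
  ring


lemma cc_nz (n α p : ℕ) (hn : 3 ≤ n) (hα : 1 ≤ α) : cc n α p ≠ 0 := by
  rcases eq_or_ne α n with rfl | hne
  · rw [cc, if_pos rfl]
    have : (0:ℚ) < 2 * ∏ r ∈ Finset.range (p+1), ((1:ℚ)/2 + r) :=
      mul_pos two_pos (Finset.prod_pos fun r _ => by positivity)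
    exact this.ne'
  · rw [cc, if_neg hne]
    have hnq : (3:ℚ) ≤ (n:ℚ) := by exact_mod_cast hn
    have h1 : (0:ℚ) < 2*(n:ℚ) - 2 := by linarith
    have h2 : (0:ℚ) < ∏ r ∈ Finset.range (p+1), ((2*(α:ℚ)-1)/(2*(n:ℚ)-2) + r) := by
      refine Finset.prod_pos fun r _ => ?_
      have hα' : (1:ℚ) ≤ (α:ℚ) := by exact_mod_cast hα
      have hnum : (0:ℚ) < 2*(α:ℚ)-1 := by linarith
      have := div_pos hnum h1
      have hr : (0:ℚ) ≤ (r:ℚ) := Nat.cast_nonneg r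
      linarith
    exact (mul_pos h1 h2).ne'

lemma TD (n α p : ℕ) (q : PP) (hc : cc n α p ≠ 0) :
    Tmul n α p (Dop n α p q) = X (vIdx n α p) * pderiv (vIdx n α p) q := by
  simp only [Tmul, Dop]
  rw [mul_smul_comm, smul_smul, mul_inv_cancel₀ hc, one_smul]

lemma Icc_split {M : Type*} [AddCommMonoid M] (n : ℕ) (hn : 1 ≤ n) (f : ℕ → M) :
    ∑ α ∈ Finset.Icc 1 n, f α = ∑ α ∈ Finset.Icc 1 (n-1), f α + f n := by
  conv_lhs => rw [show n = (n-1)+1 by omega]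
  rw [Finset.sum_Icc_succ_top (by omega), show n-1+1 = n by omega]

lemma sq_sum (c : ℚ) (k : ℕ) : ∑ α ∈ Finset.Icc 1 k, (2*(α:ℚ) - c)^2
    = 4*(k:ℚ)*(k+1)*(2*(k:ℚ)+1)/6 - 2*c*(k:ℚ)*((k:ℚ)+1) + (k:ℚ)*c^2 := by
  induction k with
  | zero => simp
  | succ k ih =>
      rw [Finset.sum_Icc_succ_top (by omega), ih]
      push_cast
      ring


/-- the Virasoro operator
`L_0 = Σ_α Σ_{p≥0} (p+1/2+μ_α)·T^{α,p}∘∂_{α,p} + (1/4)·Σ_α (1/4-μ_α²)·Id`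
of the Frobenius manifold of the Coxeter group `D_n` equals `V_0`. -/
theorem L_zero_eq_V_zero (n : ℕ) (hn : 3 ≤ n) (q : PP) :
    (∑ α ∈ Finset.Icc 1 n, ∑ᶠ p : ℕ,
        ((p : ℚ) + 1 / 2 + mu n α) • Tmul n α p (Dop n α p q))
      + ((1 / 4 : ℚ) * ∑ α ∈ Finset.Icc 1 n, ((1 : ℚ) / 4 - mu n α ^ 2)) • q
      = Vop n 0 q := by
  classical
  have hnq : (3:ℚ) ≤ (n:ℚ) := by exact_mod_cast hn
  set N : Finset ℕ := q.vars.image Prod.snd with hNdef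
  set M : ℕ := N.sup id + 1 with hMdef
  set K : ℕ := (n-1) * M with hKdef
  have hMK : M ≤ K := by
    calc M = 1*M := (one_mul M).symm
    _ ≤ (n-1)*M := Nat.mul_le_mul_right M (by omega)
  have hvar : ∀ (b : Bool) (m : ℕ), m ∉ N → pderiv ((b,m) : Bool × ℕ) q = 0 := by
    intro b m hm
    apply pderiv_eq_zero_of_notMem_vars
    intro hv
    exact hm (Finset.mem_image_of_mem Prod.snd hv)
  have hNM : ∀ m ∈ N, m < M := fun m hm => Nat.lt_succ_of_le (Finset.le_sup (f := id) hm)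
  have hvK : ∀ (b : Bool) (m : ℕ), m ∉ Finset.range K → pderiv ((b,m) : Bool × ℕ) q = 0 := by
    intro b m hm
    apply hvar
    intro hmN
    exact hm (Finset.mem_range.2 (lt_of_lt_of_le (hNM m hmN) hMK))
  have hgN : ∀ (b : Bool) (m : ℕ), gT b q m ≠ 0 → m ∈ N := by
    intro b m hg
    by_contra hc
    exact hg (by rw [gT, hvar b m hc, mul_zero])
  -- RHS
  simp only [Vop, mul_zero, zero_sub]
  rw [if_pos trivial]
  rw [sum_nord false q (Finset.range K) (hvK false),
      sum_nord true q (Finset.range K) (hvK true),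
      Finset.smul_sum, Finset.smul_sum]
  -- LHS split
  rw [Icc_split n (by omega)]
  have piece_n : (∑ᶠ p : ℕ, ((p : ℚ) + 1 / 2 + mu n n) • Tmul n n p (Dop n n p q))
      = ∑ m ∈ Finset.range K, (8:ℚ)⁻¹ • ((4*(2*(m:ℚ)+1)) • gT true q m) := by
    have h1 : ∀ p : ℕ, ((p : ℚ) + 1 / 2 + mu n n) • Tmul n n p (Dop n n p q)
        = ((p:ℚ) + 1/2) • gT true q p := by
      intro p
      rw [mu, if_pos rfl, add_zero, TD n n p q (cc_nz n n p hn (by omega))]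
      simp only [vIdx, if_pos rfl]
      rfl
    rw [finsum_congr h1]
    have hs : (Function.support fun p : ℕ => ((p:ℚ)+1/2) • gT true q p)
        ⊆ ↑(Finset.range K) := by
      intro p hp
      simp only [Function.mem_support] at hp
      have hg : gT true q p ≠ 0 := fun h => hp (by rw [h, smul_zero])
      exact Finset.mem_coe.2 (Finset.mem_range.2 (lt_of_lt_of_le (hNM p (hgN true p hg)) hMK))
    rw [finsum_eq_finset_sum_of_support_subset _ hs]
    refine Finset.sum_congr rfl fun m hm => ?_
    rw [smul_smul]
    congr 1
    ring
  have piece_lt : (∑ α ∈ Finset.Icc 1 (n-1), ∑ᶠ p : ℕ,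
        ((p : ℚ) + 1 / 2 + mu n α) • Tmul n α p (Dop n α p q))
      = ∑ m ∈ Finset.range K, (8*(n:ℚ)-8)⁻¹ • ((4*(2*(m:ℚ)+1)) • gT false q m) := by
    have hstep : ∀ α ∈ Finset.Icc 1 (n-1),
        (∑ᶠ p : ℕ, ((p : ℚ) + 1 / 2 + mu n α) • Tmul n α p (Dop n α p q))
        = ∑ p ∈ Finset.range M, ((p:ℚ)+1/2+mu n α) • gT false q ((n-1)*p + α - 1) := by
      intro α hα
      rw [Finset.mem_Icc] at hα
      have hne : α ≠ n := by omega
      have h1 : ∀ p : ℕ, ((p : ℚ) + 1 / 2 + mu n α) • Tmul n α p (Dop n α p q)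
          = ((p:ℚ)+1/2+mu n α) • gT false q ((n-1)*p + α - 1) := by
        intro p
        rw [TD n α p q (cc_nz n α p hn (by omega))]
        simp only [vIdx, if_neg hne]
        rfl
      rw [finsum_congr h1]
      refine finsum_eq_finset_sum_of_support_subset _ ?_
      intro p hp
      simp only [Function.mem_support] at hp
      have hg : gT false q ((n-1)*p + α - 1) ≠ 0 := fun h => hp (by rw [h, smul_zero])
      have hmem := hNM _ (hgN false _ hg)
      have hple : 1*p ≤ (n-1)*p := Nat.mul_le_mul_right p (by omega)
      exact Finset.mem_coe.2 (Finset.mem_range.2 (by omega))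
    rw [Finset.sum_congr rfl hstep, ← Finset.sum_product']
    refine Finset.sum_nbij' (i := fun a => (n-1)*a.2 + a.1 - 1)
      (j := fun m => (m % (n-1) + 1, m / (n-1))) ?_ ?_ ?_ ?_ ?_
    · rintro ⟨α, p⟩ ha
      simp only [Finset.mem_product, Finset.mem_Icc, Finset.mem_range] at ha ⊢
      have h2 : (n-1)*(p+1) ≤ (n-1)*M := Nat.mul_le_mul_left _ (by omega)
      have h3 : (n-1)*(p+1) = (n-1)*p + (n-1) := by ring
      omega
    · intro m hm
      simp only [Finset.mem_range] at hm
      simp only [Finset.mem_product, Finset.mem_Icc, Finset.mem_range]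
      have h1 : m % (n-1) < n-1 := Nat.mod_lt _ (by omega)
      have hm' : m < (n-1) * M := by rw [hKdef] at hm; exact hm
      have h2 : m / (n-1) < M := Nat.div_lt_of_lt_mul hm'
      exact ⟨⟨by omega, by omega⟩, h2⟩
    · rintro ⟨α, p⟩ ha
      simp only [Finset.mem_product, Finset.mem_Icc, Finset.mem_range] at ha
      have key : (n-1)*p + α - 1 = (n-1)*p + (α-1) := by omega
      simp only [key]
      have h1 : ((n-1)*p + (α-1)) % (n-1) = α-1 := by
        rw [Nat.mul_add_mod, Nat.mod_eq_of_lt (by omega)]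
      have h2 : ((n-1)*p + (α-1)) / (n-1) = p := by
        rw [Nat.mul_add_div (by omega), Nat.div_eq_of_lt (by omega), add_zero]
      rw [h1, h2, show α-1+1 = α by omega]
    · intro m hm
      have hdm := Nat.div_add_mod m (n-1)
      simp only []
      omega
    · rintro ⟨α, p⟩ ha
      simp only [Finset.mem_product, Finset.mem_Icc, Finset.mem_range] at ha
      rw [smul_smul]
      congr 1
      have hcast : (((n-1)*p + α - 1 : ℕ) : ℚ) = ((n:ℚ)-1)*(p:ℚ) + (α:ℚ) - 1 := by
        have key : (n-1)*p + α - 1 = (n-1)*p + (α-1) := by omega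
        rw [key]
        push_cast [Nat.cast_sub (by omega : 1 ≤ n), Nat.cast_sub (by omega : 1 ≤ α)]
        ring
      rw [hcast, mu, if_neg (by omega : α ≠ n)]
      have h8 : (8*(n:ℚ)-8) ≠ 0 := by linarith
      have h2 : (2*(n:ℚ)-2) ≠ 0 := by linarith
      have h1 : (n:ℚ) - 1 ≠ 0 := by linarith
      field_simp
      ring
  have piece_c : (1 / 4 : ℚ) * ∑ α ∈ Finset.Icc 1 n, ((1 : ℚ) / 4 - mu n α ^ 2)
      = (n : ℚ) / 24 * (1 + (2 * (n : ℚ) - 2)⁻¹) := by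
    rw [Icc_split n (by omega)]
    rw [mu, if_pos rfl]
    have hmu : ∀ α ∈ Finset.Icc 1 (n-1), ((1:ℚ)/4 - mu n α ^ 2)
        = 1/4 - (2*(α:ℚ) - n)^2 / (2*(n:ℚ)-2)^2 := by
      intro α hα
      rw [Finset.mem_Icc] at hα
      rw [mu, if_neg (by omega : α ≠ n), div_pow]
    rw [Finset.sum_congr rfl hmu, Finset.sum_sub_distrib, Finset.sum_const,
        Nat.card_Icc, ← Finset.sum_div, sq_sum, nsmul_eq_mul]
    have hc1 : ((n - 1 : ℕ) : ℚ) = (n:ℚ) - 1 := by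
      push_cast [Nat.cast_sub (by omega : 1 ≤ n)]; ring
    rw [show n - 1 + 1 - 1 = n - 1 by omega, hc1]
    have h2 : (2*(n:ℚ)-2) ≠ 0 := by linarith
    have h1 : (n:ℚ) - 1 ≠ 0 := by linarith
    field_simp
    ring
  rw [piece_n, piece_lt, piece_c]

end
end
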